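/- arXiv:2602.21844 — 15 statements merged into one kernel-verified Lean document; each statement's English description precedes it below -/
import Mathlib

section
/- Every minimizer (p*, ε*) of Problem 3 admits a threshold index h ∈ {1, …, N} such that: p*₁ ≥ 1/N; p*ₖ = 1/N for every k with 1 < k < h; p*_h ≤ 1/N; and p*ₖ = 0 for every k with h < k ≤ N. -/
open Finset MeasureTheory Real

/-- Differential-privacy error term: sum over clients with nonzero selection
probability of `pₖ² / εₖ²`. -/
noncomputable def dpError {N : ℕ} (p ε : Fin N → ℝ) : ℝ :=
  ∑ k, if p k ≠ 0 then (p k) ^ 2 / (ε k) ^ 2 else 0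

/-- Objective of Problem 3:
`G(p,ε) = η(‖p−pᵘ‖₁ + √(‖p−pᵘ‖₁² + Q·Σ_{pₖ≠0} pₖ²/εₖ²)) + Σₖ εₖ vₖ`,
where `pᵘ = (1/N,…,1/N)`. -/
noncomputable def objG {N : ℕ} (η Q : ℝ) (v p ε : Fin N → ℝ) : ℝ :=
  η * ((∑ k, |p k - 1 / (N : ℝ)|) +
      Real.sqrt ((∑ k, |p k - 1 / (N : ℝ)|) ^ 2 + Q * dpError p ε)) +
    ∑ k, ε k * v k

/-- Feasible set of Problem 3: `Σₖ pₖ = 1`, `pₖ ≥ 0`, `εₖ ≥ 0`, and `εₖ > 0`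
whenever `pₖ > 0`. -/
def Feasible {N : ℕ} (p ε : Fin N → ℝ) : Prop :=
  (∑ k, p k = 1) ∧ (∀ k, 0 ≤ p k) ∧ (∀ k, 0 ≤ ε k) ∧ (∀ k, 0 < p k → 0 < ε k)

/-- `(p, ε)` is a minimizer of Problem 3 with virtual costs `v`. -/
def IsMinimizer {N : ℕ} (η Q : ℝ) (v p ε : Fin N → ℝ) : Prop :=
  Feasible p ε ∧ ∀ q e : Fin N → ℝ, Feasible q e → objG η Q v p ε ≤ objG η Q v q e

/- ------------------------------------------------------------------------ -/
/- Auxiliary lemmas                                                          -/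
/- ------------------------------------------------------------------------ -/

lemma aux_sum_diff_pair {N : ℕ} (f g : Fin N → ℝ) (a b : Fin N) (hab : a ≠ b)
    (h : ∀ k, k ≠ a → k ≠ b → f k = g k) :
    ∑ k, f k = (∑ k, g k) + ((f a - g a) + (f b - g b)) := by
  have h1 : ∑ k, (f k - g k) = ∑ k ∈ ({a, b} : Finset (Fin N)), (f k - g k) := by
    refine (Finset.sum_subset (Finset.subset_univ _) ?_).symm
    intro x _ hx
    simp only [Finset.mem_insert, Finset.mem_singleton, not_or] at hx
    rw [h x hx.1 hx.2]; ring
  rw [Finset.sum_pair hab] at h1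
  have h2 : ∑ k, (f k - g k) = ∑ k, f k - ∑ k, g k := Finset.sum_sub_distrib _ _
  linarith [h1, h2]

lemma aux_sum_diff_single {N : ℕ} (f g : Fin N → ℝ) (a : Fin N)
    (h : ∀ k, k ≠ a → f k = g k) :
    ∑ k, f k = (∑ k, g k) + (f a - g a) := by
  have h1 : ∑ k, (f k - g k) = ∑ k ∈ ({a} : Finset (Fin N)), (f k - g k) := by
    refine (Finset.sum_subset (Finset.subset_univ _) ?_).symm
    intro x _ hx
    simp only [Finset.mem_singleton] at hx
    rw [h x hx]; ring
  rw [Finset.sum_singleton] at h1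
  have h2 : ∑ k, (f k - g k) = ∑ k, f k - ∑ k, g k := Finset.sum_sub_distrib _ _
  linarith [h1, h2]

lemma aux_dpError_pos {N : ℕ} (p ε : Fin N → ℝ) (k : Fin N) (hpk : 0 < p k)
    (hεk : 0 < ε k) : 0 < dpError p ε := by
  have hterm : (0:ℝ) < (if p k ≠ 0 then (p k) ^ 2 / (ε k) ^ 2 else 0) := by
    rw [if_pos hpk.ne']
    positivity
  refine lt_of_lt_of_le hterm ?_
  refine Finset.single_le_sum (f := fun j => if p j ≠ 0 then (p j)^2/(ε j)^2 else 0) ?_ (Finset.mem_univ k)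
  intro j _
  split
  · positivity
  · exact le_refl 0

/-- At a minimizer, `ε` vanishes off the support of `p`. -/
lemma aux_eps_zero_off_support {N : ℕ} (η Q : ℝ) (v p ε : Fin N → ℝ)
    (hmin : IsMinimizer η Q v p ε) (k : Fin N) (hpk : p k = 0) (hvk : 0 < v k) :
    ε k = 0 := by
  obtain ⟨⟨hsum, hp0, hε0, hpε⟩, hopt⟩ := hmin
  by_contra hne
  have hεk : 0 < ε k := (hε0 k).lt_of_ne (Ne.symm hne)
  set e := Function.update ε k 0 with he
  have hfeas : Feasible p e := by
    refine ⟨hsum, hp0, ?_, ?_⟩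
    · intro j
      rcases eq_or_ne j k with rfl | hj
      · simp [he]
      · simpa [he, Function.update_of_ne hj] using hε0 j
    · intro j hj
      have hjk : j ≠ k := by rintro rfl; rw [hpk] at hj; exact lt_irrefl 0 hj
      simpa [he, Function.update_of_ne hjk] using hpε j hj
  have hdp : dpError p e = dpError p ε := by
    rw [dpError, dpError]
    refine Finset.sum_congr rfl ?_
    intro j _
    rcases eq_or_ne j k with rfl | hj
    · rw [if_neg (by simpa using hpk), if_neg (by simpa using hpk)]
    · rw [he, Function.update_of_ne hj]
  have hcost : ∑ j, e j * v j = (∑ j, ε j * v j) - ε k * v k := by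
    rw [aux_sum_diff_single (fun j => e j * v j) (fun j => ε j * v j) k
      (by intro j hj; simp [he, Function.update_of_ne hj])]
    simp [he]
    ring
  have hlt : objG η Q v p e < objG η Q v p ε := by
    rw [objG, objG, hdp, hcost]
    have : 0 < ε k * v k := mul_pos hεk hvk
    linarith
  exact absurd (hopt p e hfeas) (not_le.mpr hlt)

/-- At a minimizer, `ε` is nonincreasing (given strictly increasing costs). -/
lemma aux_eps_antitone {N : ℕ} (η Q : ℝ) (v p ε : Fin N → ℝ)
    (hv_mono : StrictMono v)
    (hmin : IsMinimizer η Q v p ε) (j k : Fin N) (hjk : j < k) :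
    ε k ≤ ε j := by
  obtain ⟨⟨hsum, hp0, hε0, hpε⟩, hopt⟩ := hmin
  have hne : j ≠ k := ne_of_lt hjk
  set q : Fin N → ℝ := fun m => if m = j then p k else if m = k then p j else p m with hq
  set e : Fin N → ℝ := fun m => if m = j then ε k else if m = k then ε j else ε m with he
  have hqj : q j = p k := by simp [hq]
  have hqk : q k = p j := by simp [hq, hne.symm]
  have hej : e j = ε k := by simp [he]
  have hek : e k = ε j := by simp [he, hne.symm]
  have hfeas : Feasible q e := by
    refine ⟨?_, ?_, ?_, ?_⟩
    · rw [aux_sum_diff_pair q p j k hne (by intro m hma hmb; simp [hq, hma, hmb])]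
      rw [hqj, hqk, hsum]; ring
    · intro m
      rcases eq_or_ne m j with rfl | h1
      · rw [hqj]; exact hp0 k
      rcases eq_or_ne m k with rfl | h2
      · rw [hqk]; exact hp0 j
      · simpa [hq, h1, h2] using hp0 m
    · intro m
      rcases eq_or_ne m j with rfl | h1
      · rw [hej]; exact hε0 k
      rcases eq_or_ne m k with rfl | h2
      · rw [hek]; exact hε0 j
      · simpa [he, h1, h2] using hε0 m
    · intro m hm
      rcases eq_or_ne m j with rfl | h1
      · rw [hqj] at hm; rw [hej]; exact hpε k hm
      rcases eq_or_ne m k with rfl | h2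
      · rw [hqk] at hm; rw [hek]; exact hpε j hm
      · simp only [hq, h1, h2, if_neg] at hm
        simpa [he, h1, h2] using hpε m hm
  have hS : ∑ m, |q m - 1/(N:ℝ)| = ∑ m, |p m - 1/(N:ℝ)| := by
    rw [aux_sum_diff_pair (fun m => |q m - 1/(N:ℝ)|) (fun m => |p m - 1/(N:ℝ)|) j k hne
      (by intro m hma hmb; simp [hq, hma, hmb])]
    rw [hqj, hqk]; ring
  have hdp : dpError q e = dpError p ε := by
    rw [dpError, dpError]
    rw [aux_sum_diff_pair (fun m => if q m ≠ 0 then (q m)^2/(e m)^2 else 0)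
      (fun m => if p m ≠ 0 then (p m)^2/(ε m)^2 else 0) j k hne
      (by intro m hma hmb; simp [hq, he, hma, hmb])]
    rw [hqj, hqk, hej, hek]
    rcases eq_or_ne (p j) 0 with h1 | h1 <;> rcases eq_or_ne (p k) 0 with h2 | h2 <;>
      simp [h1, h2] <;> ring
  have hcost : ∑ m, e m * v m
      = (∑ m, ε m * v m) + ((ε k - ε j) * (v j - v k)) := by
    rw [aux_sum_diff_pair (fun m => e m * v m) (fun m => ε m * v m) j k hne
      (by intro m hma hmb; simp [he, hma, hmb])]
    rw [hej, hek]; ring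
  have hle := hopt q e hfeas
  rw [objG, objG, hS, hdp, hcost] at hle
  have h2 : 0 ≤ (ε k - ε j) * (v j - v k) := by linarith
  have hv : v j < v k := hv_mono hjk
  nlinarith [h2, hv]

/-- First-order condition in `ε k` at a minimizer. -/
lemma aux_foc {N : ℕ} (η Q : ℝ) (hη : 0 < η) (hQ : 0 < Q) (v p ε : Fin N → ℝ)
    (hmin : IsMinimizer η Q v p ε) (k : Fin N) (hpk : 0 < p k) :
    v k * (ε k)^3 * Real.sqrt ((∑ j, |p j - 1/(N:ℝ)|)^2 + Q * dpError p ε)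
      = η * Q * (p k)^2 := by
  obtain ⟨⟨hsum, hp0, hε0, hpε⟩, hopt⟩ := hmin
  have hεk : 0 < ε k := hpε k hpk
  set S : ℝ := ∑ j, |p j - 1/(N:ℝ)| with hS
  set D : ℝ := dpError p ε with hD
  have hDpos : 0 < D := aux_dpError_pos p ε k hpk hεk
  set D₀ : ℝ := D - (p k)^2/(ε k)^2 with hD₀
  set C₀ : ℝ := (∑ j, ε j * v j) - ε k * v k with hC₀
  set f : ℝ → ℝ := fun t => η * (S + Real.sqrt (S^2 + Q*(D₀ + (p k)^2/t^2))) + (C₀ + t * v k) with hf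
  have key : ∀ t : ℝ, 0 < t → objG η Q v p (Function.update ε k t) = f t := by
    intro t ht
    have hdp : dpError p (Function.update ε k t) = D₀ + (p k)^2/t^2 := by
      rw [dpError]
      rw [aux_sum_diff_single (fun j => if p j ≠ 0 then (p j)^2/(Function.update ε k t j)^2 else 0)
        (fun j => if p j ≠ 0 then (p j)^2/(ε j)^2 else 0) k
        (by intro j hj; simp [Function.update_of_ne hj])]
      simp only [Function.update_self, if_pos hpk.ne']
      rw [hD₀, hD, dpError]; ring
    have hcost : ∑ j, Function.update ε k t j * v j = C₀ + t * v k := by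
      rw [aux_sum_diff_single (fun j => Function.update ε k t j * v j) (fun j => ε j * v j) k
        (by intro j hj; simp [Function.update_of_ne hj])]
      simp only [Function.update_self]
      rw [hC₀]; ring
    rw [objG, hdp, hcost, hf]
  have hfeq : f (ε k) = objG η Q v p ε := by
    rw [← key (ε k) hεk, Function.update_eq_self]
  have hminOn : ∀ t ∈ Set.Ioi (0:ℝ), f (ε k) ≤ f t := by
    intro t ht
    rw [hfeq, ← key t ht]
    refine hopt _ _ ⟨hsum, hp0, ?_, ?_⟩
    · intro j
      rcases eq_or_ne j k with rfl | hj
      · simpa using le_of_lt ht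
      · simpa [Function.update_of_ne hj] using hε0 j
    · intro j hj
      rcases eq_or_ne j k with rfl | hjk
      · simpa using ht
      · simpa [Function.update_of_ne hjk] using hpε j hj
  have hlocal : IsLocalMin f (ε k) := by
    have : IsMinOn f (Set.Ioi (0:ℝ)) (ε k) := by
      intro t ht; exact hminOn t ht
    exact this.isLocalMin (Ioi_mem_nhds hεk)
  have hg0 : D₀ + (p k)^2/(ε k)^2 = D := by rw [hD₀]; ring
  have harg_pos : 0 < S^2 + Q*(D₀ + (p k)^2/(ε k)^2) := by
    rw [hg0]; positivity
  have hsq : HasDerivAt (fun t : ℝ => t^2) (2 * ε k) (ε k) := by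
    simpa using hasDerivAt_pow 2 (ε k)
  have hinv : HasDerivAt (fun t : ℝ => ((t:ℝ)^2)⁻¹) (-(2 * ε k) / ((ε k)^2)^2) (ε k) :=
    hsq.inv (by positivity)
  have hg : HasDerivAt (fun t : ℝ => S^2 + Q*(D₀ + (p k)^2/t^2))
      (Q * ((p k)^2 * (-(2 * ε k) / ((ε k)^2)^2))) (ε k) := by
    have h1 : HasDerivAt (fun t : ℝ => (p k)^2 / t^2)
        ((p k)^2 * (-(2 * ε k) / ((ε k)^2)^2)) (ε k) := by
      simpa [div_eq_mul_inv] using hinv.const_mul ((p k)^2)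
    have heq : (fun t : ℝ => S^2 + Q*(D₀ + (p k)^2/t^2))
        = fun t : ℝ => (S^2 + Q*D₀) + Q*((p k)^2/t^2) := by
      funext t; ring
    rw [heq]
    exact (h1.const_mul Q).const_add (S^2 + Q*D₀)
  have hsqrt : HasDerivAt (fun t : ℝ => Real.sqrt (S^2 + Q*(D₀ + (p k)^2/t^2)))
      ((Q * ((p k)^2 * (-(2 * ε k) / ((ε k)^2)^2))) / (2 * Real.sqrt (S^2 + Q*(D₀ + (p k)^2/(ε k)^2)))) (ε k) :=
    hg.sqrt harg_pos.ne'
  have hF : HasDerivAt f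
      (η * ((Q * ((p k)^2 * (-(2 * ε k) / ((ε k)^2)^2))) / (2 * Real.sqrt (S^2 + Q*(D₀ + (p k)^2/(ε k)^2)))) + v k) (ε k) := by
    have h2 : HasDerivAt (fun t : ℝ => C₀ + t * v k) (v k) (ε k) := by
      simpa using (hasDerivAt_id (ε k)).mul_const (v k) |>.const_add C₀
    exact ((hsqrt.const_add S).const_mul η).add h2
  have hderiv0 := hlocal.hasDerivAt_eq_zero hF
  rw [hg0] at hderiv0
  have hRpos : 0 < Real.sqrt (S^2 + Q*D) := Real.sqrt_pos.mpr (by positivity)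
  have hrw : Real.sqrt ((∑ j, |p j - 1/(N:ℝ)|)^2 + Q * dpError p ε) = Real.sqrt (S^2 + Q*D) := rfl
  rw [hrw]
  field_simp at hderiv0
  nlinarith [hRpos, sq_nonneg (ε k), hεk, hderiv0]

/-- Strict monotonicity of marginal costs `v k ε k / p k` along the support. -/
lemma aux_marginal_strict {N : ℕ} (η Q : ℝ) (hη : 0 < η) (hQ : 0 < Q) (v p ε : Fin N → ℝ)
    (hv_mono : StrictMono v) (hva : ∀ k, 0 < v k)
    (hmin : IsMinimizer η Q v p ε) (a b : Fin N) (hab : a < b)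
    (hpa : 0 < p a) (hpb : 0 < p b) :
    v a * ε a * p b < v b * ε b * p a := by
  have hεa : 0 < ε a := hmin.1.2.2.2 a hpa
  have hεb : 0 < ε b := hmin.1.2.2.2 b hpb
  have hεba : ε b ≤ ε a := aux_eps_antitone η Q v p ε hv_mono hmin a b hab
  have hfa := aux_foc η Q hη hQ v p ε hmin a hpa
  have hfb := aux_foc η Q hη hQ v p ε hmin b hpb
  set R : ℝ := Real.sqrt ((∑ j, |p j - 1/(N:ℝ)|)^2 + Q * dpError p ε) with hR
  have hDpos : 0 < dpError p ε := aux_dpError_pos p ε a hpa hεa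
  have hRpos : 0 < R := Real.sqrt_pos.mpr (by positivity)
  have hvab : v a < v b := hv_mono hab
  have hvea : v a * ε b < v b * ε a := by nlinarith [hva a, hva b]
  have h1 : η*Q*((v b * ε b * p a)^2) - η*Q*((v a * ε a * p b)^2)
      = R * (v a * v b * (ε a)^2 * (ε b)^2) * (v b * ε a - v a * ε b) := by
    linear_combination ((v a)^2 * (ε a)^2) * hfb - ((v b)^2 * (ε b)^2) * hfa
  have hpos : 0 < R * (v a * v b * (ε a)^2 * (ε b)^2) * (v b * ε a - v a * ε b) := by
    have h3 : 0 < v b * ε a - v a * ε b := by linarith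
    have h2 : 0 < v a * v b * (ε a)^2 * (ε b)^2 := by
      have := hva a; have := hva b; positivity
    exact mul_pos (mul_pos hRpos h2) h3
  have hsq : (v a * ε a * p b)^2 < (v b * ε b * p a)^2 := by
    nlinarith [h1, hpos, mul_pos hη hQ]
  have hYpos : 0 ≤ v b * ε b * p a := (mul_pos (mul_pos (hva b) hεb) hpa).le
  exact lt_of_pow_lt_pow_left₀ 2 hYpos hsq

/-- Transfer move: moving `δ` of probability from `b` to `a` (rescaling `ε`
proportionally) which does not increase the `ℓ¹` distance forces the marginal
cost inequality `v b ε b / p b ≤ v a ε a / p a`. -/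
lemma aux_transfer {N : ℕ} (η Q : ℝ) (hη : 0 < η) (hQ : 0 < Q) (v p ε : Fin N → ℝ)
    (hmin : IsMinimizer η Q v p ε) (a b : Fin N) (hab : a ≠ b)
    (hpa : 0 < p a) (hpb : 0 < p b) (δ : ℝ) (hδ : 0 < δ) (hδb : δ < p b)
    (hS' : ∑ m, |(if m = a then p a + δ else if m = b then p b - δ else p m) - 1/(N:ℝ)|
        ≤ ∑ m, |p m - 1/(N:ℝ)|) :
    v b * ε b * p a ≤ v a * ε a * p b := by
  obtain ⟨⟨hsum, hp0, hε0, hpε⟩, hopt⟩ := hmin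
  have hεa : 0 < ε a := hpε a hpa
  have hεb : 0 < ε b := hpε b hpb
  have hpaδ : 0 < p a + δ := by linarith
  have hpbδ : 0 < p b - δ := by linarith
  set q : Fin N → ℝ := fun m => if m = a then p a + δ else if m = b then p b - δ else p m with hq
  set e : Fin N → ℝ := fun m => if m = a then ε a * ((p a + δ)/p a)
      else if m = b then ε b * ((p b - δ)/p b) else ε m with he
  have hqa : q a = p a + δ := by simp [hq]
  have hqb : q b = p b - δ := by simp [hq, hab.symm]
  have hea : e a = ε a * ((p a + δ)/p a) := by simp [he]
  have heb : e b = ε b * ((p b - δ)/p b) := by simp [he, hab.symm]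
  have heapos : 0 < e a := by rw [hea]; positivity
  have hebpos : 0 < e b := by rw [heb]; positivity
  have hfeas : Feasible q e := by
    refine ⟨?_, ?_, ?_, ?_⟩
    · rw [aux_sum_diff_pair q p a b hab (by intro m hma hmb; simp [hq, hma, hmb])]
      rw [hqa, hqb, hsum]; ring
    · intro m
      rcases eq_or_ne m a with rfl | h1
      · rw [hqa]; exact hpaδ.le
      rcases eq_or_ne m b with rfl | h2
      · rw [hqb]; exact hpbδ.le
      · simpa [hq, h1, h2] using hp0 m
    · intro m
      rcases eq_or_ne m a with rfl | h1
      · exact heapos.le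
      rcases eq_or_ne m b with rfl | h2
      · exact hebpos.le
      · simpa [he, h1, h2] using hε0 m
    · intro m hm
      rcases eq_or_ne m a with rfl | h1
      · exact heapos
      rcases eq_or_ne m b with rfl | h2
      · exact hebpos
      · simp only [hq, h1, h2, if_neg] at hm
        simpa [he, h1, h2] using hpε m hm
  have hdp : dpError q e = dpError p ε := by
    rw [dpError, dpError]
    rw [aux_sum_diff_pair (fun m => if q m ≠ 0 then (q m)^2/(e m)^2 else 0)
      (fun m => if p m ≠ 0 then (p m)^2/(ε m)^2 else 0) a b hab
      (by intro m hma hmb; simp [hq, he, hma, hmb])]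
    rw [hqa, hqb, hea, heb, if_pos hpaδ.ne', if_pos hpbδ.ne', if_pos hpa.ne', if_pos hpb.ne']
    have e1 : (p a + δ)^2 / (ε a * ((p a + δ)/p a))^2 = (p a)^2/(ε a)^2 := by
      field_simp
    have e2 : (p b - δ)^2 / (ε b * ((p b - δ)/p b))^2 = (p b)^2/(ε b)^2 := by
      field_simp
    rw [e1, e2]; ring
  have hcost : ∑ m, e m * v m
      = (∑ m, ε m * v m) + δ * (v a * ε a / p a) - δ * (v b * ε b / p b) := by
    rw [aux_sum_diff_pair (fun m => e m * v m) (fun m => ε m * v m) a b hab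
      (by intro m hma hmb; simp [he, hma, hmb])]
    rw [hea, heb]
    field_simp
    ring
  set S' : ℝ := ∑ m, |q m - 1/(N:ℝ)| with hSd
  set S : ℝ := ∑ m, |p m - 1/(N:ℝ)| with hSp
  have hS'S : S' ≤ S := hS'
  have hS'0 : 0 ≤ S' := Finset.sum_nonneg (fun m _ => abs_nonneg _)
  have hsqrt : Real.sqrt (S'^2 + Q * dpError p ε) ≤ Real.sqrt (S^2 + Q * dpError p ε) := by
    apply Real.sqrt_le_sqrt
    have : S'^2 ≤ S^2 := by nlinarith
    linarith
  have hobj : objG η Q v q e ≤ objG η Q v p ε + δ * (v a * ε a / p a) - δ * (v b * ε b / p b) := by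
    rw [objG, objG, hdp, hcost]
    have h1 : η * (S' + Real.sqrt (S'^2 + Q * dpError p ε))
        ≤ η * (S + Real.sqrt (S^2 + Q * dpError p ε)) := by
      apply mul_le_mul_of_nonneg_left _ hη.le
      linarith
    rw [← hSd, ← hSp]
    linarith
  have hle := hopt q e hfeas
  have hkey : 0 ≤ δ * (v a * ε a / p a) - δ * (v b * ε b / p b) := by linarith
  have hdiv : v b * ε b / p b ≤ v a * ε a / p a := by
    have : 0 ≤ δ * (v a * ε a / p a - v b * ε b / p b) := by linarith
    nlinarith [hδ]
  exact (div_le_div_iff₀ hpb hpa).mp hdiv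

/-- Every minimizer of Problem 3 (with strictly increasing positive
virtual costs) has a threshold structure: the first client gets probability
`≥ 1/N`, clients strictly between the first and the threshold `h` get exactly
`1/N`, client `h` gets `≤ 1/N`, and all clients after `h` get `0`. -/
theorem optimal_selection_threshold_structure
    {N : ℕ} (hN : 2 ≤ N) (v : Fin N → ℝ)
    (hv_pos : 0 < v ⟨0, by omega⟩) (hv_mono : StrictMono v)
    (η Q : ℝ) (hη : 0 < η) (hQ : 0 < Q)
    (p ε : Fin N → ℝ) (hmin : IsMinimizer η Q v p ε) :
    ∃ h : Fin N,
      1 / (N : ℝ) ≤ p ⟨0, by omega⟩ ∧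
      (∀ k : Fin N, (⟨0, by omega⟩ : Fin N) < k → k < h → p k = 1 / (N : ℝ)) ∧
      p h ≤ 1 / (N : ℝ) ∧
      (∀ k : Fin N, h < k → p k = 0) := by
  obtain ⟨⟨hsum, hp0, hε0, hpε⟩, hopt⟩ := hmin
  have hmin' : IsMinimizer η Q v p ε := ⟨⟨hsum, hp0, hε0, hpε⟩, hopt⟩
  set z0 : Fin N := ⟨0, by omega⟩ with hz0
  have hNpos : (0:ℝ) < (N:ℝ) := by positivity
  have hu : (0:ℝ) < 1/(N:ℝ) := by positivity
  have hz0le : ∀ k : Fin N, z0 ≤ k := by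
    intro k; simp [hz0, Fin.le_def]
  have hz0lt : ∀ k : Fin N, k ≠ z0 → z0 < k := by
    intro k hk; exact lt_of_le_of_ne (hz0le k) (Ne.symm hk)
  have hva : ∀ k, 0 < v k := by
    intro k
    rcases eq_or_ne k z0 with rfl | hk
    · exact hv_pos
    · exact lt_trans hv_pos (hv_mono (hz0lt k hk))
  -- support is an initial segment
  have hsupp : ∀ j k : Fin N, j ≤ k → 0 < p k → 0 < p j := by
    intro j k hjk hpk
    rcases eq_or_lt_of_le hjk with rfl | hlt
    · exact hpk
    have hεk : 0 < ε k := hpε k hpk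
    have hεj : ε k ≤ ε j := aux_eps_antitone η Q v p ε hv_mono hmin' j k hlt
    have hεjpos : 0 < ε j := lt_of_lt_of_le hεk hεj
    rcases (hp0 j).lt_or_eq with h | h
    · exact h
    · exfalso
      have := aux_eps_zero_off_support η Q v p ε hmin' j h.symm (hva j)
      rw [this] at hεjpos
      exact lt_irrefl 0 hεjpos
  -- T1: everyone except client 0 gets at most 1/N
  have T1 : ∀ k : Fin N, z0 < k → p k ≤ 1/(N:ℝ) := by
    intro k hk
    by_contra hgt
    push_neg at hgt
    have hpk : 0 < p k := lt_trans hu hgt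
    have hpz : 0 < p z0 := hsupp z0 k (hz0le k) hpk
    set δ : ℝ := (p k - 1/(N:ℝ))/2 with hδdef
    have hδ : 0 < δ := by rw [hδdef]; linarith
    have hδb : δ < p k := by rw [hδdef]; linarith
    have hS' : ∑ m, |(if m = z0 then p z0 + δ else if m = k then p k - δ else p m) - 1/(N:ℝ)|
        ≤ ∑ m, |p m - 1/(N:ℝ)| := by
      rw [aux_sum_diff_pair
        (fun m => |(if m = z0 then p z0 + δ else if m = k then p k - δ else p m) - 1/(N:ℝ)|)
        (fun m => |p m - 1/(N:ℝ)|) z0 k (ne_of_lt hk)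
        (by intro m hma hmb; simp [hma, hmb])]
      simp only [eq_self_iff_true, if_true, if_neg (ne_of_gt hk)]
      have e1 : |p z0 + δ - 1/(N:ℝ)| - |p z0 - 1/(N:ℝ)| ≤ δ := by
        have : |p z0 + δ - 1/(N:ℝ)| ≤ |p z0 - 1/(N:ℝ)| + |δ| := by
          have := abs_add_le (p z0 - 1/(N:ℝ)) δ
          calc |p z0 + δ - 1/(N:ℝ)| = |(p z0 - 1/(N:ℝ)) + δ| := by ring_nf
          _ ≤ |p z0 - 1/(N:ℝ)| + |δ| := abs_add_le _ _
        rw [abs_of_pos hδ] at this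
        linarith
      have e2 : |p k - δ - 1/(N:ℝ)| - |p k - 1/(N:ℝ)| = -δ := by
        rw [abs_of_pos (by rw [hδdef]; linarith : 0 < p k - δ - 1/(N:ℝ)),
          abs_of_pos (by linarith : 0 < p k - 1/(N:ℝ))]
        ring
      linarith
    have htr := aux_transfer η Q hη hQ v p ε hmin' z0 k (ne_of_lt hk) hpz hpk δ hδ hδb hS'
    have hstrict := aux_marginal_strict η Q hη hQ v p ε hv_mono hva hmin' z0 k hk hpz hpk
    linarith
  -- client 0 gets at least 1/N
  have hp_z0 : 1/(N:ℝ) ≤ p z0 := by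
    have hbound : ∑ m ∈ Finset.univ.erase z0, p m ≤ ∑ m ∈ Finset.univ.erase z0, (1/(N:ℝ)) := by
      apply Finset.sum_le_sum
      intro m hm
      exact T1 m (hz0lt m (Finset.ne_of_mem_erase hm))
    have hcard : (Finset.univ.erase z0).card = N - 1 := by
      rw [Finset.card_erase_of_mem (Finset.mem_univ z0), Finset.card_univ, Fintype.card_fin]
    have hsplit : (∑ m ∈ Finset.univ.erase z0, p m) + p z0 = 1 := by
      rw [Finset.sum_erase_add _ _ (Finset.mem_univ z0)]
      exact hsum
    rw [Finset.sum_const, hcard] at hbound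
    have hcast : ((N - 1 : ℕ) : ℝ) = (N:ℝ) - 1 := by
      have : 1 ≤ N := by omega
      push_cast [Nat.cast_sub this]
      ring
    rw [nsmul_eq_mul, hcast] at hbound
    have : ((N:ℝ) - 1) * (1/(N:ℝ)) = 1 - 1/(N:ℝ) := by field_simp
    rw [this] at hbound
    linarith
  -- case split on whether the support extends beyond client 0
  by_cases hcase : ∀ k : Fin N, z0 < k → p k = 0
  · refine ⟨⟨1, by omega⟩, hp_z0, ?_, ?_, ?_⟩
    · intro k hk1 hk2
      exfalso
      have h1 : 0 < k.val := hk1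
      have h2 : k.val < 1 := hk2
      omega
    · have : z0 < (⟨1, by omega⟩ : Fin N) := by
        rw [Fin.lt_def]; simp [hz0]
      rw [hcase _ this]
      exact hu.le
    · intro k hk
      apply hcase
      calc z0 < (⟨1, by omega⟩ : Fin N) := by rw [Fin.lt_def]; simp [hz0]
      _ < k := hk
  · push_neg at hcase
    obtain ⟨k₀, hk₀gt, hk₀ne⟩ := hcase
    have hk₀pos : 0 < p k₀ := (hp0 k₀).lt_of_ne (Ne.symm hk₀ne)
    set T : Finset (Fin N) := Finset.univ.filter (fun k => z0 < k ∧ 0 < p k) with hT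
    have hTne : T.Nonempty := ⟨k₀, by simp [hT, hk₀gt, hk₀pos]⟩
    set h : Fin N := T.max' hTne with hh
    have hhT : h ∈ T := T.max'_mem hTne
    have hhgt : z0 < h := by
      have := hhT; simp [hT] at this; exact this.1
    have hph : 0 < p h := by
      have := hhT; simp [hT] at this; exact this.2
    refine ⟨h, hp_z0, ?_, T1 h hhgt, ?_⟩
    · -- interior clients get exactly 1/N
      intro k hk1 hk2
      have hpk : 0 < p k := hsupp k h hk2.le hph
      have hle : p k ≤ 1/(N:ℝ) := T1 k hk1
      rcases eq_or_lt_of_le hle with heq | hlt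
      · exact heq
      exfalso
      set δ : ℝ := min ((1/(N:ℝ) - p k)/2) (p h / 2) with hδdef
      have hδ : 0 < δ := by
        rw [hδdef]
        apply lt_min <;> linarith
      have hδh : δ < p h := by
        have : δ ≤ p h / 2 := min_le_right _ _
        linarith
      have hδk : p k + δ < 1/(N:ℝ) := by
        have : δ ≤ (1/(N:ℝ) - p k)/2 := min_le_left _ _
        linarith
      have hS' : ∑ m, |(if m = k then p k + δ else if m = h then p h - δ else p m) - 1/(N:ℝ)|
          ≤ ∑ m, |p m - 1/(N:ℝ)| := by
        rw [aux_sum_diff_pair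
          (fun m => |(if m = k then p k + δ else if m = h then p h - δ else p m) - 1/(N:ℝ)|)
          (fun m => |p m - 1/(N:ℝ)|) k h (ne_of_lt hk2)
          (by intro m hma hmb; simp [hma, hmb])]
        simp only [eq_self_iff_true, if_true, if_neg (ne_of_gt hk2)]
        have e1 : |p k + δ - 1/(N:ℝ)| - |p k - 1/(N:ℝ)| = -δ := by
          rw [abs_of_neg (by linarith : p k + δ - 1/(N:ℝ)   < 0),
            abs_of_neg (by linarith : p k - 1/(N:ℝ) < 0)]
          ring
        have e2 : |p h - δ - 1/(N:ℝ)| - |p h - 1/(N:ℝ)| ≤ δ := by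
          have : |p h - δ - 1/(N:ℝ)| ≤ |p h - 1/(N:ℝ)| + |δ| := by
            calc |p h - δ - 1/(N:ℝ)| = |(p h - 1/(N:ℝ)) + (-δ)| := by ring_nf
            _ ≤ |p h - 1/(N:ℝ)| + |(-δ)| := abs_add_le _ _
            _ = |p h - 1/(N:ℝ)| + |δ| := by rw [abs_neg]
          rw [abs_of_pos hδ] at this
          linarith
        linarith
      have htr := aux_transfer η Q hη hQ v p ε hmin' k h (ne_of_lt hk2) hpk hph δ hδ hδh hS'
      have hstrict := aux_marginal_strict η Q hη hQ v p ε hv_mono hva hmin' k h hk2 hpk hph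
      linarith
    · -- clients after h get 0
      intro k hk
      by_contra hne
      have hpk : 0 < p k := (hp0 k).lt_of_ne (Ne.symm hne)
      have hkT : k ∈ T := by
        simp only [hT, Finset.mem_filter, Finset.mem_univ, true_and]
        exact ⟨lt_trans hhgt hk, hpk⟩
      have := T.le_max' k hkT
      rw [← hh] at this
      exact absurd hk (not_lt.mpr this)
end

section
/- Define ε*ₖ = pₖ^{2/3}·B / ((Σᵢ vᵢ^{2/3}·pᵢ^{2/3})·vₖ^{1/3}) for each k ∈ {1, …, N}. Then ε* is feasible, i.e., Σₖ vₖ·ε*ₖ = B, ε*ₖ ≥ 0 for all k, and ε*ₖ > 0 whenever pₖ > 0; and ε* minimizes the differential-privacy error term: for every ε ∈ ℝ^N with εₖ ≥ 0 for all k, εₖ > 0 whenever pₖ > 0, and Σₖ vₖ·εₖ = B, one has Σ_{k : pₖ ≠ 0} pₖ²/εₖ² ≥ Σ_{k : pₖ ≠ 0} pₖ²/(ε*ₖ)². -/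
open Finset Real

/-- The privacy budgets
`ε*ₖ = pₖ^{2/3}·B / ((Σᵢ vᵢ^{2/3} pᵢ^{2/3})·vₖ^{1/3})` are feasible (they exhaust
the budget `B`, are nonnegative, and positive on selected clients) and minimize
the differential-privacy error among all feasible budget vectors. -/
theorem optimal_privacy_budgets
    {N : ℕ} (hN : 1 ≤ N) (v p : Fin N → ℝ) (B : ℝ)
    (hv : ∀ k, 0 < v k) (hp : ∀ k, 0 ≤ p k) (hp0 : ∃ k, p k ≠ 0) (hB : 0 < B)
    (εstar : Fin N → ℝ)
    (hεstar : ∀ k, εstar k =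
      (p k) ^ ((2 : ℝ) / 3) * B /
        ((∑ i, (v i) ^ ((2 : ℝ) / 3) * (p i) ^ ((2 : ℝ) / 3)) * (v k) ^ ((1 : ℝ) / 3))) :
    (∑ k, v k * εstar k = B) ∧ (∀ k, 0 ≤ εstar k) ∧ (∀ k, 0 < p k → 0 < εstar k) ∧
    (∀ ε : Fin N → ℝ, (∀ k, 0 ≤ ε k) → (∀ k, 0 < p k → 0 < ε k) →
      (∑ k, v k * ε k = B) → dpError p εstar ≤ dpError p ε) := by
  set S : ℝ := ∑ i, (v i) ^ ((2:ℝ)/3) * (p i) ^ ((2:ℝ)/3) with hSdef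
  obtain ⟨k₀, hk₀⟩ := hp0
  have hpk₀ : 0 < p k₀ := lt_of_le_of_ne (hp k₀) (Ne.symm hk₀)
  have hS0 : 0 < S := by
    apply Finset.sum_pos'
    · intro i _
      have := hp i
      have := (hv i).le
      positivity
    · exact ⟨k₀, Finset.mem_univ _, by
        have := hv k₀
        positivity⟩
  -- budget exhaustion
  have hve : ∀ k, v k * εstar k = (v k) ^ ((2:ℝ)/3) * (p k) ^ ((2:ℝ)/3) * B / S := by
    intro k
    rw [hεstar k]
    have hv13 : (0:ℝ) < (v k) ^ ((1:ℝ)/3) := Real.rpow_pos_of_pos (hv k) _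
    have hvk : v k = (v k) ^ ((2:ℝ)/3) * (v k) ^ ((1:ℝ)/3) := by
      rw [← Real.rpow_add (hv k)]; norm_num
    nth_rewrite 1 [hvk]
    field_simp
  have hsum : ∑ k, v k * εstar k = B := by
    simp_rw [hve]
    rw [← Finset.sum_div, ← Finset.sum_mul]
    field_simp
    exact hSdef.symm
  have hnonneg : ∀ k, 0 ≤ εstar k := by
    intro k
    rw [hεstar k]
    have h1 := hp k
    have h2 := hv k
    positivity
  have hpos : ∀ k, 0 < p k → 0 < εstar k := by
    intro k hk
    rw [hεstar k]
    have h2 := hv k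
    positivity
  have hzero : ∀ k, p k = 0 → εstar k = 0 := by
    intro k hk
    rw [hεstar k, hk, Real.zero_rpow (by norm_num), zero_mul, zero_div]
  refine ⟨hsum, hnonneg, hpos, ?_⟩
  intro ε hε1 hε2 hεB
  have hc : 0 ≤ S ^ 3 / B ^ 3 := by positivity
  have key : ∀ k ∈ Finset.univ,
      (if p k ≠ 0 then (p k) ^ 2 / (εstar k) ^ 2 else 0)
        + 2 * (S ^ 3 / B ^ 3) * (v k * εstar k - v k * ε k)
      ≤ (if p k ≠ 0 then (p k) ^ 2 / (ε k) ^ 2 else 0) := by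
    intro k _
    by_cases hpk : p k = 0
    · simp only [hpk, ne_eq, not_true_eq_false, if_false]
      rw [hzero k hpk]
      have h1 : 0 ≤ v k * ε k := mul_nonneg (hv k).le (hε1 k)
      nlinarith
    · simp only [hpk, ne_eq, not_false_eq_true, if_true]
      have hpk' : 0 < p k := lt_of_le_of_ne (hp k) (Ne.symm hpk)
      have hx : 0 < ε k := hε2 k hpk'
      have ha : 0 < εstar k := hpos k hpk'
      set a := εstar k with ha'
      have hav : (S ^ 3 / B ^ 3) * v k = (p k) ^ 2 / a ^ 3 := by
        rw [ha', hεstar k, div_pow, mul_pow, mul_pow]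
        have h1 : ((p k) ^ ((2:ℝ)/3)) ^ 3 = (p k) ^ 2 := by
          rw [← Real.rpow_natCast ((p k) ^ ((2:ℝ)/3)) 3, ← Real.rpow_mul (hp k)]
          norm_num
        have h2 : ((v k) ^ ((1:ℝ)/3)) ^ 3 = v k := by
          rw [← Real.rpow_natCast ((v k) ^ ((1:ℝ)/3)) 3, ← Real.rpow_mul (hv k).le]
          norm_num
        rw [h1, h2]
        have hvk := hv k
        field_simp
      have hineq : (p k) ^ 2 / (ε k) ^ 2
          - ((p k) ^ 2 / a ^ 2 + 2 * ((p k) ^ 2 / a ^ 3) * (a - ε k))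
          = (p k) ^ 2 * (ε k - a) ^ 2 * (2 * (ε k) + a) / ((ε k) ^ 2 * a ^ 3) := by
        field_simp
        ring
      have hnn : 0 ≤ (p k) ^ 2 * (ε k - a) ^ 2 * (2 * (ε k) + a) / ((ε k) ^ 2 * a ^ 3) := by
        positivity
      have h3 : 2 * (S ^ 3 / B ^ 3) * (v k * a - v k * ε k)
          = 2 * ((p k) ^ 2 / a ^ 3) * (a - ε k) := by
        rw [← hav]; ring
      linarith
  have hsum2 := Finset.sum_le_sum key
  have hleft : ∑ k, ((if p k ≠ 0 then (p k) ^ 2 / (εstar k) ^ 2 else 0)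
      + 2 * (S ^ 3 / B ^ 3) * (v k * εstar k - v k * ε k)) = dpError p εstar := by
    rw [Finset.sum_add_distrib, ← Finset.mul_sum, Finset.sum_sub_distrib, hsum, hεB]
    simp [dpError]
  rw [hleft] at hsum2
  exact hsum2
end

section
/- The minimum of the differential-privacy error term Σ_{k : pₖ ≠ 0} pₖ²/εₖ², taken over all ε ∈ ℝ^N with εₖ ≥ 0 for all k, εₖ > 0 whenever pₖ > 0, and Σₖ vₖ·εₖ = B, is attained and equals (Σₖ (pₖ·vₖ)^{2/3})³ / B². -/
open Finset Real

/-- The minimum of the differential-privacy error over all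
feasible privacy-budget vectors (nonnegative, positive on selected clients,
exhausting the monetary budget `B`) is attained and equals
`(Σₖ (pₖ vₖ)^{2/3})³ / B²`. -/
theorem dpError_min_value
    {N : ℕ} (hN : 1 ≤ N) (v p : Fin N → ℝ) (B : ℝ)
    (hv : ∀ k, 0 < v k) (hp : ∀ k, 0 ≤ p k) (hp0 : ∃ k, p k ≠ 0) (hB : 0 < B) :
    IsLeast
      {x : ℝ | ∃ ε : Fin N → ℝ, (∀ k, 0 ≤ ε k) ∧ (∀ k, 0 < p k → 0 < ε k) ∧
        (∑ k, v k * ε k = B) ∧ x = dpError p ε}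
      ((∑ k, (p k * v k) ^ ((2 : ℝ) / 3)) ^ 3 / B ^ 2) := by
  set S : ℝ := ∑ k, (p k * v k) ^ ((2 : ℝ) / 3) with hSdef
  have hSterm : ∀ k, 0 ≤ (p k * v k) ^ ((2 : ℝ) / 3) := fun k =>
    Real.rpow_nonneg (mul_nonneg (hp k) (hv k).le) _
  have hS : 0 < S := by
    obtain ⟨k0, hk0⟩ := hp0
    have hpk0 : 0 < p k0 := lt_of_le_of_ne (hp k0) (Ne.symm hk0)
    have : 0 < (p k0 * v k0) ^ ((2 : ℝ) / 3) :=
      Real.rpow_pos_of_pos (mul_pos hpk0 (hv k0)) _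
    exact Finset.sum_pos' (fun k _ => hSterm k) ⟨k0, Finset.mem_univ _, this⟩
  constructor
  · -- membership: the optimal ε attains the value
    refine ⟨fun k => (B / S) * (p k * v k) ^ ((2 : ℝ) / 3) / v k, ?_, ?_, ?_, ?_⟩
    · intro k
      exact div_nonneg (mul_nonneg (div_nonneg hB.le hS.le) (hSterm k)) (hv k).le
    · intro k hpk
      exact div_pos (mul_pos (div_pos hB hS)
        (Real.rpow_pos_of_pos (mul_pos hpk (hv k)) _)) (hv k)
    · have : ∀ k, v k * ((B / S) * (p k * v k) ^ ((2 : ℝ) / 3) / v k)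
          = (B / S) * (p k * v k) ^ ((2 : ℝ) / 3) := fun k => by
        rw [mul_comm (v k) _, div_mul_cancel₀ _ (hv k).ne']
      rw [Finset.sum_congr rfl fun k _ => this k, ← Finset.mul_sum, ← hSdef]
      field_simp
    · unfold dpError
      have key : ∀ k, (if p k ≠ 0 then
            (p k) ^ 2 / ((B / S) * (p k * v k) ^ ((2 : ℝ) / 3) / v k) ^ 2 else 0)
          = S ^ 2 / B ^ 2 * (p k * v k) ^ ((2 : ℝ) / 3) := by
        intro k
        by_cases hpk : p k = 0
        · simp [hpk, Real.zero_rpow (by norm_num : ((2:ℝ)/3) ≠ 0)]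
        · have hpkpos : 0 < p k := lt_of_le_of_ne (hp k) (Ne.symm hpk)
          have ht : 0 < p k * v k := mul_pos hpkpos (hv k)
          rw [if_pos hpk]
          have h43 : ((p k * v k) ^ ((2 : ℝ) / 3)) ^ 2 = (p k * v k) ^ ((4 : ℝ) / 3) := by
            rw [← Real.rpow_natCast ((p k * v k) ^ ((2 : ℝ) / 3)) 2,
              ← Real.rpow_mul ht.le]
            norm_num
          have h2 : (p k * v k) ^ (2 : ℕ)
              = (p k * v k) ^ ((4 : ℝ) / 3) * (p k * v k) ^ ((2 : ℝ) / 3) := by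
            rw [← Real.rpow_add ht, ← Real.rpow_natCast (p k * v k) 2]
            norm_num
          have h43ne : (p k * v k) ^ ((4 : ℝ) / 3) ≠ 0 :=
            (Real.rpow_pos_of_pos ht _).ne'
          field_simp [div_pow, mul_pow, h43]
          ring_nf
          ring_nf at h2
          nlinarith [Real.rpow_pos_of_pos ht ((4:ℝ)/3), Real.rpow_pos_of_pos ht ((2:ℝ)/3),
            sq_nonneg (S * B), hS, hB, mul_pos hS hB]
      rw [Finset.sum_congr rfl fun k _ => key k, ← Finset.mul_sum, ← hSdef]
      field_simp
  · -- lower bound via Hölder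
    rintro x ⟨ε, hε0, hεpos, hsum, rfl⟩
    have hE0 : 0 ≤ dpError p ε := by
      apply Finset.sum_nonneg
      intro k _
      split
      · positivity
      · exact le_rfl
    set E := dpError p ε with hEdef
    -- Hölder with exponents 3 and 3/2
    have hconj : Real.HolderConjugate 3 (3 / 2) := ⟨by norm_num, by norm_num, by norm_num⟩
    set f : Fin N → ℝ := fun k => ((p k) ^ 2 / (ε k) ^ 2) ^ ((1 : ℝ) / 3) with hfdef
    set g : Fin N → ℝ := fun k => (v k * ε k) ^ ((2 : ℝ) / 3) with hgdef
    have hf0 : ∀ k, 0 ≤ f k := fun k => Real.rpow_nonneg (by positivity) _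
    have hg0 : ∀ k, 0 ≤ g k := fun k =>
      Real.rpow_nonneg (mul_nonneg (hv k).le (hε0 k)) _
    have hfg : ∀ k, f k * g k = (p k * v k) ^ ((2 : ℝ) / 3) := by
      intro k
      by_cases hpk : p k = 0
      · simp [hfdef, hgdef, hpk, Real.zero_rpow (by norm_num : ((1:ℝ)/3) ≠ 0),
          Real.zero_rpow (by norm_num : ((2:ℝ)/3) ≠ 0)]
      · have hpkpos : 0 < p k := lt_of_le_of_ne (hp k) (Ne.symm hpk)
        have hεk : 0 < ε k := hεpos k hpkpos
        have h1 : g k = ((v k * ε k) ^ 2) ^ ((1 : ℝ) / 3) := by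
          rw [hgdef]
          rw [← Real.rpow_natCast (v k * ε k) 2, ← Real.rpow_mul
            (mul_nonneg (hv k).le (hε0 k))]
          norm_num
        have h2 : (p k) ^ 2 / (ε k) ^ 2 * (v k * ε k) ^ 2 = (p k * v k) ^ 2 := by
          field_simp
        have h3 : ((p k * v k) ^ 2) ^ ((1 : ℝ) / 3) = (p k * v k) ^ ((2 : ℝ) / 3) := by
          rw [← Real.rpow_natCast (p k * v k) 2, ← Real.rpow_mul
            (mul_nonneg (hp k) (hv k).le)]
          norm_num
        rw [hfdef, h1]
        simp only
        rw [← Real.mul_rpow (by positivity) (by positivity), h2, h3]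
    have hf3 : ∀ k, f k ^ (3 : ℝ) = (if p k ≠ 0 then (p k) ^ 2 / (ε k) ^ 2 else 0) := by
      intro k
      have : f k ^ (3 : ℝ) = (p k) ^ 2 / (ε k) ^ 2 := by
        rw [hfdef]
        simp only
        rw [← Real.rpow_mul (by positivity)]
        norm_num
      rw [this]
      by_cases hpk : p k = 0
      · simp [hpk]
      · rw [if_pos hpk]
    have hg32 : ∀ k, g k ^ ((3 : ℝ) / 2) = v k * ε k := by
      intro k
      rw [hgdef]
      simp only
      rw [← Real.rpow_mul (mul_nonneg (hv k).le (hε0 k))]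
      norm_num
    have holder := Real.inner_le_Lp_mul_Lq_of_nonneg Finset.univ hconj
      (fun k _ => hf0 k) (fun k _ => hg0 k)
    rw [Finset.sum_congr rfl fun k _ => hfg k,
      Finset.sum_congr rfl fun k _ => hf3 k,
      Finset.sum_congr rfl fun k _ => hg32 k, hsum] at holder
    -- holder : S ≤ E ^ (1/3) * B ^ (1/(3/2))
    rw [show (1 : ℝ) / (3 / 2) = 2 / 3 by norm_num] at holder
    have hholder : S ≤ E ^ ((1 : ℝ) / 3) * B ^ ((2 : ℝ) / 3) := holder
    have hcube : S ^ 3 ≤ E * B ^ 2 := by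
      calc S ^ 3 ≤ (E ^ ((1 : ℝ) / 3) * B ^ ((2 : ℝ) / 3)) ^ 3 :=
            pow_le_pow_left₀ hS.le hholder 3
        _ = E * B ^ 2 := by
            rw [mul_pow, ← Real.rpow_natCast (E ^ ((1:ℝ)/3)) 3,
              ← Real.rpow_natCast (B ^ ((2:ℝ)/3)) 3,
              ← Real.rpow_mul hE0, ← Real.rpow_mul hB.le]
            norm_num
    rw [div_le_iff₀ (by positivity)]
    exact hcube
end

section
/- The pair (π, ε) satisfies IC and IR if and only if: ε is nonincreasing on [0,∞), ε is integrable on (0,∞), and there exists a constant d ≥ 0 such that π(c) = ∫_c^∞ ε(z) dz + c·ε(c) + d for every c ≥ 0. -/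
open MeasureTheory Set intervalIntegral Filter

lemma ic_env_key (ε u : ℝ → ℝ) (hmono : AntitoneOn ε (Set.Ici 0))
    (hsand : ∀ a b : ℝ, 0 ≤ a → a ≤ b →
      (b - a) * ε b ≤ u a - u b ∧ u a - u b ≤ (b - a) * ε a)
    {a b : ℝ} (ha : 0 ≤ a) (hab : a ≤ b) :
    u a - u b = ∫ z in a..b, ε z := by
  have key : ∀ n : ℕ, |u a - u b - ∫ z in a..b, ε z| ≤ (b - a) / (n + 1) * (ε a - ε b) := by
    intro n
    set h : ℝ := (b - a) / (n + 1) with hh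
    have hn1 : (0:ℝ) < (n:ℝ) + 1 := by positivity
    have hhnn : 0 ≤ h := div_nonneg (by linarith) hn1.le
    set x : ℕ → ℝ := fun i => a + i * h with hx
    have hx0 : x 0 = a := by simp [hx]
    have hstepsum : ((n:ℝ) + 1) * h = b - a := by
      rw [hh]; field_simp
    have hxn : x (n + 1) = b := by
      simp only [hx]; push_cast; linarith
    have hxmono : ∀ i, x i ≤ x (i + 1) := by
      intro i
      simp only [hx]
      push_cast
      nlinarith
    have hxstep : ∀ i, x (i + 1) - x i = h := by
      intro i; simp only [hx]; push_cast; ring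
    have hxnonneg : ∀ i, 0 ≤ x i := fun i => by
      simp only [hx]; positivity
    -- interval integrability on each piece
    have hεint : ∀ i, IntervalIntegrable ε volume (x i) (x (i + 1)) := by
      intro i
      apply AntitoneOn.intervalIntegrable
      apply hmono.mono
      rw [Set.uIcc_of_le (hxmono i)]
      intro z hz
      exact le_trans (hxnonneg i) hz.1
    -- per-piece bounds
    have hpiece : ∀ i, |(u (x i) - u (x (i + 1))) - ∫ z in (x i)..(x (i + 1)), ε z|
        ≤ h * (ε (x i) - ε (x (i + 1))) := by
      intro i
      have hs := hsand (x i) (x (i + 1)) (hxnonneg i) (hxmono i)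
      rw [hxstep i] at hs
      have hup : ∫ z in (x i)..(x (i + 1)), ε z ≤ h * ε (x i) := by
        have hmle : ∀ z ∈ Set.Icc (x i) (x (i+1)), ε z ≤ ε (x i) :=
          fun z hz => hmono (hxnonneg i) (le_trans (hxnonneg i) hz.1) hz.1
        have := intervalIntegral.integral_mono_on (hxmono i) (hεint i)
          (_root_.intervalIntegrable_const (c := ε (x i))) hmle
        rwa [intervalIntegral.integral_const, hxstep i, smul_eq_mul] at this
      have hlo : h * ε (x (i + 1)) ≤ ∫ z in (x i)..(x (i + 1)), ε z := by
        have hmge : ∀ z ∈ Set.Icc (x i) (x (i+1)), ε (x (i+1)) ≤ ε z :=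
          fun z hz => hmono (le_trans (hxnonneg i) hz.1) (hxnonneg (i+1)) hz.2
        have := intervalIntegral.integral_mono_on (hxmono i)
          (_root_.intervalIntegrable_const (c := ε (x (i+1)))) (hεint i) hmge
        rwa [intervalIntegral.integral_const, hxstep i, smul_eq_mul] at this
      rw [abs_le]
      constructor <;> nlinarith [hs.1, hs.2]
    -- telescoping identities
    have hsumu : ∑ i ∈ Finset.range (n + 1), (u (x i) - u (x (i + 1))) = u a - u b := by
      rw [Finset.sum_range_sub' (fun i => u (x i)) (n + 1), hx0, hxn]
    have hsumint : ∑ i ∈ Finset.range (n + 1), ∫ z in (x i)..(x (i + 1)), ε z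
        = ∫ z in a..b, ε z := by
      rw [intervalIntegral.sum_integral_adjacent_intervals (fun k _ => hεint k), hx0, hxn]
    have hsumeps : ∑ i ∈ Finset.range (n + 1), h * (ε (x i) - ε (x (i + 1)))
        = h * (ε a - ε b) := by
      rw [← Finset.mul_sum, Finset.sum_range_sub' (fun i => ε (x i)) (n + 1), hx0, hxn]
    calc |u a - u b - ∫ z in a..b, ε z|
        = |∑ i ∈ Finset.range (n + 1),
            ((u (x i) - u (x (i + 1))) - ∫ z in (x i)..(x (i + 1)), ε z)| := by
          rw [Finset.sum_sub_distrib, hsumu, hsumint]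
      _ ≤ ∑ i ∈ Finset.range (n + 1),
            |(u (x i) - u (x (i + 1))) - ∫ z in (x i)..(x (i + 1)), ε z| :=
          Finset.abs_sum_le_sum_abs _ _
      _ ≤ ∑ i ∈ Finset.range (n + 1), h * (ε (x i) - ε (x (i + 1))) :=
          Finset.sum_le_sum fun i _ => hpiece i
      _ = h * (ε a - ε b) := hsumeps
  -- conclude by letting n → ∞
  have htend : Filter.Tendsto (fun n : ℕ => (b - a) / (n + 1) * (ε a - ε b))
      Filter.atTop (nhds 0) := by
    have h1 : Filter.Tendsto (fun n : ℕ => ((n:ℝ) + 1)) Filter.atTop Filter.atTop :=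
      Filter.tendsto_atTop_add_const_right _ 1 tendsto_natCast_atTop_atTop
    have := (Filter.Tendsto.div_atTop (tendsto_const_nhds (x := (b - a))) h1).mul_const (ε a - ε b)
    simpa using this
  have := le_of_tendsto_of_tendsto tendsto_const_nhds htend
    (Filter.Eventually.of_forall key)
  have habs : |u a - u b - ∫ z in a..b, ε z| ≤ 0 := this
  have := abs_nonneg (u a - u b - ∫ z in a..b, ε z)
  linarith [abs_nonpos_iff.mp habs, sub_eq_zero.mp (abs_eq_zero.mp (le_antisymm habs (abs_nonneg _)))]

-- converse key inequality
lemma ic_conv_key (ε : ℝ → ℝ) (hε_nonneg : ∀ c, 0 ≤ c → 0 ≤ ε c)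
    (hmono : AntitoneOn ε (Set.Ici 0)) (hInt : IntegrableOn ε (Set.Ioi 0))
    {c c' : ℝ} (hc : 0 ≤ c) (hc' : 0 ≤ c') :
    (∫ z in Set.Ioi c', ε z) + (c' - c) * ε c' ≤ ∫ z in Set.Ioi c, ε z := by
  have hIoisub : ∀ t : ℝ, 0 ≤ t → IntegrableOn ε (Set.Ioi t) :=
    fun t ht => hInt.mono_set (Set.Ioi_subset_Ioi ht)
  have hIocsub : ∀ s t : ℝ, 0 ≤ s → IntegrableOn ε (Set.Ioc s t) :=
    fun s t hs => hInt.mono_set (fun z hz => lt_of_le_of_lt hs hz.1)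
  rcases le_total c c' with hcc | hcc
  · -- c ≤ c' : split Ioi c = Ioc c c' ∪ Ioi c'
    have hsplit : (∫ z in Set.Ioi c, ε z)
        = (∫ z in Set.Ioc c c', ε z) + ∫ z in Set.Ioi c', ε z := by
      rw [← MeasureTheory.setIntegral_union (Set.Ioc_disjoint_Ioi le_rfl)
        measurableSet_Ioi (hIocsub c c' hc) (hIoisub c' hc'),
        Set.Ioc_union_Ioi_eq_Ioi hcc]
    have hlow : (c' - c) * ε c' ≤ ∫ z in Set.Ioc c c', ε z := by
      have := MeasureTheory.setIntegral_mono_on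
        (f := fun _ => ε c') (g := ε)
        (integrableOn_const measure_Ioc_lt_top.ne)
        (hIocsub c c' hc) measurableSet_Ioc
        (fun z hz => hmono (le_trans hc hz.1.le) hc' hz.2)
      rwa [MeasureTheory.setIntegral_const, Real.volume_real_Ioc_of_le hcc,
        smul_eq_mul] at this
    linarith
  · -- c' ≤ c
    have hsplit : (∫ z in Set.Ioi c', ε z)
        = (∫ z in Set.Ioc c' c, ε z) + ∫ z in Set.Ioi c, ε z := by
      rw [← MeasureTheory.setIntegral_union (Set.Ioc_disjoint_Ioi le_rfl)
        measurableSet_Ioi (hIocsub c' c hc') (hIoisub c hc),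
        Set.Ioc_union_Ioi_eq_Ioi hcc]
    have hup : (∫ z in Set.Ioc c' c, ε z) ≤ (c - c') * ε c' := by
      have := MeasureTheory.setIntegral_mono_on
        (f := ε) (g := fun _ => ε c')
        (hIocsub c' c hc')
        (integrableOn_const measure_Ioc_lt_top.ne)
        measurableSet_Ioc
        (fun z hz => hmono hc' (le_trans hc' hz.1.le) hz.1.le)
      rwa [MeasureTheory.setIntegral_const, Real.volume_real_Ioc_of_le hcc,
        smul_eq_mul] at this
    linarith

/-- A pair `(π, ε)` (payment rule, allocation rule, with `ε`
nonnegative on `[0,∞)`) satisfies incentive compatibility and individual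
rationality if and only if `ε` is nonincreasing on `[0,∞)`, `ε` is integrable
on `(0,∞)`, and there is a constant `d ≥ 0` with
`π(c) = ∫_c^∞ ε(z) dz + c·ε(c) + d` for every `c ≥ 0`. -/
theorem ic_ir_characterization
    (π ε : ℝ → ℝ) (hε_nonneg : ∀ c, 0 ≤ c → 0 ≤ ε c) :
    ((∀ c c', 0 ≤ c → 0 ≤ c' → π c' - c * ε c' ≤ π c - c * ε c) ∧
     (∀ c, 0 ≤ c → 0 ≤ π c - c * ε c))
    ↔
    (AntitoneOn ε (Set.Ici 0) ∧ IntegrableOn ε (Set.Ioi 0) ∧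
     ∃ d : ℝ, 0 ≤ d ∧ ∀ c, 0 ≤ c →
       π c = (∫ z in Set.Ioi c, ε z) + c * ε c + d) := by
  constructor
  · rintro ⟨hIC, hIR⟩
    set u : ℝ → ℝ := fun c => π c - c * ε c with hu
    have hsand : ∀ a b : ℝ, 0 ≤ a → a ≤ b →
        (b - a) * ε b ≤ u a - u b ∧ u a - u b ≤ (b - a) * ε a := by
      intro a b ha hab
      have hb : 0 ≤ b := le_trans ha hab
      have h1 := hIC a b ha hb
      have h2 := hIC b a hb ha
      constructor <;> [skip; skip] <;> simp only [hu] <;> nlinarith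
    have hmono : AntitoneOn ε (Set.Ici 0) := by
      intro a ha b hb hab
      rcases eq_or_lt_of_le hab with rfl | hlt
      · exact le_rfl
      · have h := hsand a b ha hab
        nlinarith [h.1, h.2]
    have henv : ∀ a b : ℝ, 0 ≤ a → a ≤ b → u a - u b = ∫ z in a..b, ε z :=
      fun a b ha hab => ic_env_key ε u hmono hsand ha hab
    -- integrability
    have hIntIoc : ∀ t : ℝ, 0 ≤ t → IntegrableOn ε (Set.Ioc 0 t) := by
      intro t ht
      have : IntervalIntegrable ε volume 0 t := by
        apply AntitoneOn.intervalIntegrable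
        apply hmono.mono
        rw [Set.uIcc_of_le ht]
        exact fun z hz => hz.1
      exact this.1
    have hInt : IntegrableOn ε (Set.Ioi 0) := by
      apply MeasureTheory.integrableOn_Ioi_of_intervalIntegral_norm_bounded
        (u 0) 0 (b := fun n : ℕ => (n : ℝ))
        (fun n => hIntIoc n (Nat.cast_nonneg n)) tendsto_natCast_atTop_atTop
      apply Filter.Eventually.of_forall
      intro n
      have hnn : (0:ℝ) ≤ n := Nat.cast_nonneg n
      have hcongr : ∫ x in (0:ℝ)..(n:ℝ), ‖ε x‖ = ∫ x in (0:ℝ)..(n:ℝ), ε x := by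
        apply intervalIntegral.integral_congr
        intro z hz
        rw [Set.uIcc_of_le hnn] at hz
        exact Real.norm_of_nonneg (hε_nonneg z hz.1)
      rw [hcongr, ← henv 0 n le_rfl hnn]
      have := hIR n hnn
      simp only [hu]
      linarith
    -- limit of u at infinity
    have htend0 : Filter.Tendsto (fun b : ℝ => ∫ x in (0:ℝ)..b, ε x)
        Filter.atTop (nhds (∫ z in Set.Ioi 0, ε z)) :=
      MeasureTheory.intervalIntegral_tendsto_integral_Ioi 0 hInt Filter.tendsto_id
    have hutend : Filter.Tendsto u Filter.atTop
        (nhds (u 0 - ∫ z in Set.Ioi 0, ε z)) := by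
      have : Filter.Tendsto (fun b : ℝ => u 0 - ∫ x in (0:ℝ)..b, ε x)
          Filter.atTop (nhds (u 0 - ∫ z in Set.Ioi 0, ε z)) :=
        tendsto_const_nhds.sub htend0
      apply this.congr'
      filter_upwards [Filter.eventually_ge_atTop (0:ℝ)] with b hb
      rw [← henv 0 b le_rfl hb]; ring
    set d : ℝ := u 0 - ∫ z in Set.Ioi 0, ε z with hd
    have hdnn : 0 ≤ d := by
      apply ge_of_tendsto hutend
      filter_upwards [Filter.eventually_ge_atTop (0:ℝ)] with b hb
      exact hIR b hb
    refine ⟨hmono, hInt, d, hdnn, fun c hc => ?_⟩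
    have hIntc : IntegrableOn ε (Set.Ioi c) := hInt.mono_set (Set.Ioi_subset_Ioi hc)
    have htendc : Filter.Tendsto (fun b : ℝ => ∫ x in c..b, ε x)
        Filter.atTop (nhds (∫ z in Set.Ioi c, ε z)) :=
      MeasureTheory.intervalIntegral_tendsto_integral_Ioi c hIntc Filter.tendsto_id
    have htendc' : Filter.Tendsto (fun b : ℝ => ∫ x in c..b, ε x)
        Filter.atTop (nhds (u c - d)) := by
      have : Filter.Tendsto (fun b : ℝ => u c - u b) Filter.atTop (nhds (u c - d)) := by
        simpa using (tendsto_const_nhds (x := u c)).sub hutend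
      apply this.congr'
      filter_upwards [Filter.eventually_ge_atTop c] with b hb
      exact henv c b hc hb
    have heq : (∫ z in Set.Ioi c, ε z) = u c - d := tendsto_nhds_unique htendc htendc'
    simp only [hu] at heq ⊢
    linarith
  · rintro ⟨hmono, hInt, d, hdnn, hπ⟩
    constructor
    · intro c c' hc hc'
      have hkey := ic_conv_key ε hε_nonneg hmono hInt hc hc'
      rw [hπ c hc, hπ c' hc']
      nlinarith
    · intro c hc
      rw [hπ c hc]
      have : 0 ≤ ∫ z in Set.Ioi c, ε z := by
        apply MeasureTheory.setIntegral_nonneg measurableSet_Ioi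
        exact fun z hz => hε_nonneg z (le_trans hc hz.le)
      linarith
end

section
/- If the pair (π, ε) satisfies IC, then ε is nonincreasing on [0,∞) and the payment satisfies the Myerson identity π(c) = π(0) + c·ε(c) − ∫₀^c ε(z) dz for every c ≥ 0. -/
open MeasureTheory Set intervalIntegral

/-- If `(π, ε)` is incentive compatible, then the allocation `ε`
is nonincreasing on `[0,∞)` and the payment satisfies the Myerson identity
`π(c) = π(0) + c·ε(c) − ∫₀^c ε(z) dz` for every `c ≥ 0`. -/
theorem ic_implies_myerson
    (π ε : ℝ → ℝ) (hε_nonneg : ∀ c, 0 ≤ c → 0 ≤ ε c)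
    (hIC : ∀ c c', 0 ≤ c → 0 ≤ c' → π c' - c * ε c' ≤ π c - c * ε c) :
    AntitoneOn ε (Set.Ici 0) ∧
    ∀ c, 0 ≤ c → π c = π 0 + c * ε c - ∫ z in (0:ℝ)..c, ε z := by
  have hmono : AntitoneOn ε (Set.Ici 0) := by
    intro a ha b hb hab
    rcases eq_or_lt_of_le hab with rfl | hab'
    · exact le_rfl
    · have h1 := hIC a b ha hb
      have h2 := hIC b a hb ha
      nlinarith
  refine ⟨hmono, ?_⟩
  have hInt : ∀ a b : ℝ, 0 ≤ a → a ≤ b → IntervalIntegrable ε volume a b := by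
    intro a b ha hab
    exact (hmono.mono (by rw [uIcc_of_le hab]; exact fun x hx => ha.trans hx.1)).intervalIntegrable
  -- key per-interval bound
  have key : ∀ a b : ℝ, 0 ≤ a → a ≤ b →
      |((π b - b * ε b) - (π a - a * ε a)) + ∫ z in a..b, ε z| ≤ (b - a) * (ε a - ε b) := by
    intro a b ha hab
    have hb : (0:ℝ) ≤ b := ha.trans hab
    have h1 := hIC a b ha hb
    have h2 := hIC b a hb ha
    have hIab := hInt a b ha hab
    have hIu : (∫ z in a..b, ε z) ≤ (b - a) * ε a := by
      have := intervalIntegral.integral_mono_on hab hIab intervalIntegrable_const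
        (fun x hx => hmono ha (ha.trans hx.1 : (0:ℝ) ≤ x) hx.1)
      simpa [smul_eq_mul, mul_comm] using this
    have hIl : (b - a) * ε b ≤ ∫ z in a..b, ε z := by
      have := intervalIntegral.integral_mono_on hab intervalIntegrable_const hIab
        (fun x hx => hmono (ha.trans hx.1 : (0:ℝ) ≤ x) hb hx.2)
      simpa [smul_eq_mul, mul_comm] using this
    rw [abs_le]
    constructor <;> nlinarith
  intro c hc
  -- define D and show |D| ≤ c*(ε 0 - ε c)/n for all positive n
  set D : ℝ := (π c - c * ε c + ∫ z in (0:ℝ)..c, ε z) - π 0 with hD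
  have hbound : ∀ n : ℕ, 0 < n → |D| ≤ c * (ε 0 - ε c) / n := by
    intro n hn
    have hn' : (0:ℝ) < n := Nat.cast_pos.mpr hn
    set h : ℝ := c / n with hh
    have hh0 : 0 ≤ h := div_nonneg hc hn'.le
    set x : ℕ → ℝ := fun i => i * h with hx
    have hxnn : ∀ i : ℕ, 0 ≤ x i := fun i => mul_nonneg (Nat.cast_nonneg i) hh0
    have hxle : ∀ i : ℕ, x i ≤ x (i + 1) := by
      intro i
      have : (i:ℝ) ≤ (i:ℝ) + 1 := by linarith
      simpa [hx, Nat.cast_succ] using mul_le_mul_of_nonneg_right this hh0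
    have hxn : x n = c := by
      simp only [hx, hh]; rw [mul_div_assoc']; exact mul_div_cancel_left₀ c hn'.ne'
    set f : ℕ → ℝ := fun i => (π (x i) - x i * ε (x i)) + ∫ z in (0:ℝ)..(x i), ε z with hf
    have hx0 : x 0 = 0 := by simp [hx]
    have hf0 : f 0 = π 0 := by simp [hf, hx0]
    have hfn : f n = π c - c * ε c + ∫ z in (0:ℝ)..c, ε z := by simp [hf, hxn]
    have hD' : D = ∑ i ∈ Finset.range n, (f (i + 1) - f i) := by
      rw [Finset.sum_range_sub]; rw [hf0, hfn, hD]
    have hterm : ∀ i : ℕ, |f (i + 1) - f i| ≤ h * (ε (x i) - ε (x (i + 1))) := by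
      intro i
      have hsplit : (∫ z in (0:ℝ)..(x (i+1)), ε z) - (∫ z in (0:ℝ)..(x i), ε z)
          = ∫ z in (x i)..(x (i+1)), ε z := by
        rw [intervalIntegral.integral_interval_sub_left
          (hInt 0 (x (i+1)) le_rfl (hxnn (i+1))) (hInt 0 (x i) le_rfl (hxnn i))]
      have hk := key (x i) (x (i+1)) (hxnn i) (hxle i)
      have hdiff : x (i+1) - x i = h := by
        simp [hx, Nat.cast_succ]; ring
      have : f (i + 1) - f i
          = ((π (x (i+1)) - x (i+1) * ε (x (i+1))) - (π (x i) - x i * ε (x i)))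
            + ∫ z in (x i)..(x (i+1)), ε z := by
        rw [hf]; rw [← hsplit]; ring
      rw [this]
      calc _ ≤ (x (i+1) - x i) * (ε (x i) - ε (x (i+1))) := hk
        _ = h * (ε (x i) - ε (x (i+1))) := by rw [hdiff]
    calc |D| ≤ ∑ i ∈ Finset.range n, |f (i + 1) - f i| := by
          rw [hD']; exact Finset.abs_sum_le_sum_abs _ _
      _ ≤ ∑ i ∈ Finset.range n, h * (ε (x i) - ε (x (i + 1))) :=
          Finset.sum_le_sum fun i _ => hterm i
      _ = h * (ε (x 0) - ε (x n)) := by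
          rw [← Finset.mul_sum, Finset.sum_range_sub' (fun i => ε (x i))]
      _ = c * (ε 0 - ε c) / n := by rw [hx0, hxn, hh]; ring
  have hDzero : D = 0 := by
    have habs : |D| ≤ 0 := by
      refine le_of_forall_pos_le_add ?_
      intro η hη
      obtain ⟨n, hn⟩ := exists_nat_gt (c * (ε 0 - ε c) / η)
      have hK : 0 ≤ c * (ε 0 - ε c) :=
        mul_nonneg hc (sub_nonneg.mpr (hmono (le_refl (0:ℝ) : (0:ℝ) ∈ Set.Ici 0) hc hc))
      have hn0 : 0 < n := by
        by_contra h0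
        push_neg at h0
        interval_cases n
        simp at hn
        nlinarith [div_nonneg hK hη.le]
      have hn' : (0:ℝ) < n := Nat.cast_pos.mpr hn0
      have := hbound n hn0
      have h2 : c * (ε 0 - ε c) / n ≤ η := by
        rw [div_le_iff₀ hn']
        rw [div_lt_iff₀ hη] at hn
        nlinarith
      linarith
    have := abs_nonneg D
    have : |D| = 0 := le_antisymm habs this
    exact abs_eq_zero.mp this
  rw [hD] at hDzero
  linarith
end

section
/- Let f : [0,∞) → (0,∞) be a probability density (∫₀^∞ f = 1) with cumulative distribution function F(z) = ∫₀^z f(c) dc, let ε : [0,∞) → [0,∞) be measurable and integrable on (0,∞) with c ↦ c·ε(c)·f(c) integrable on (0,∞), let d ≥ 0, and suppose π(c) = ∫_c^∞ ε(z) dz + c·ε(c) + d for every c ≥ 0. Then the expected payment equals the expected virtual-cost-weighted allocation plus d: ∫₀^∞ π(c)·f(c) dc = ∫₀^∞ ε(c)·(c + F(c)/f(c))·f(c) dc + d. -/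
open MeasureTheory Set intervalIntegral

/-- For a probability density `f` on `[0,∞)` with CDF `F`, an
allocation `ε` (measurable, nonnegative, integrable on `(0,∞)`, with
`c ↦ c·ε(c)·f(c)` integrable), a constant `d ≥ 0`, and a payment
`π(c) = ∫_c^∞ ε(z) dz + c·ε(c) + d`, the expected payment equals the expected
virtual-cost-weighted allocation plus `d`:
`∫₀^∞ π(c) f(c) dc = ∫₀^∞ ε(c)(c + F(c)/f(c)) f(c) dc + d`. -/
theorem expected_payment_virtual_cost
    (f ε F π : ℝ → ℝ) (d : ℝ) (hd : 0 ≤ d)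
    (hf_pos : ∀ c, 0 ≤ c → 0 < f c)
    (hf_int : IntegrableOn f (Set.Ioi 0))
    (hf_prob : ∫ c in Set.Ioi 0, f c = 1)
    (hF : ∀ z, F z = ∫ c in (0:ℝ)..z, f c)
    (hε_meas : Measurable ε)
    (hε_nonneg : ∀ z, 0 ≤ z → 0 ≤ ε z)
    (hε_int : IntegrableOn ε (Set.Ioi 0))
    (hcε_int : IntegrableOn (fun c => c * ε c * f c) (Set.Ioi 0))
    (hπ : ∀ c, 0 ≤ c → π c = (∫ z in Set.Ioi c, ε z) + c * ε c + d) :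
    ∫ c in Set.Ioi 0, π c * f c
      = (∫ c in Set.Ioi 0, ε c * (c + F c / f c) * f c) + d := by
  set fe : ℝ → ENNReal := fun c => ENNReal.ofReal (f c) with hfe_def
  set εe : ℝ → ENNReal := fun z => ENNReal.ofReal (ε z) with hεe_def
  set Gl : ℝ → ENNReal := fun c => ∫⁻ z in Set.Ioi c, εe z with hGl_def
  set Fl : ℝ → ENNReal := fun z => ∫⁻ c in Set.Ioc 0 z, fe c with hFl_def
  set Freal : ℝ → ℝ := fun z => ∫ c in Set.Ioc 0 z, f c with hFreal_def
  -- basic facts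
  have hf_nn_ae : (0:ℝ→ℝ) ≤ᵐ[volume.restrict (Set.Ioi 0)] f :=
    (ae_restrict_iff' measurableSet_Ioi).2 (ae_of_all _ fun c hc => (hf_pos c (le_of_lt hc)).le)
  have hε_int_c : ∀ c : ℝ, 0 ≤ c → IntegrableOn ε (Set.Ioi c) := fun c hc =>
    hε_int.mono_set (Ioi_subset_Ioi hc)
  have hε_nn_c : ∀ c : ℝ, 0 ≤ c → (0:ℝ→ℝ) ≤ᵐ[volume.restrict (Set.Ioi c)] ε := fun c hc =>
    (ae_restrict_iff' measurableSet_Ioi).2 (ae_of_all _ fun z hz => hε_nonneg z (hc.trans (le_of_lt hz)))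
  have hGofReal : ∀ c : ℝ, 0 ≤ c → ENNReal.ofReal (∫ z in Set.Ioi c, ε z) = Gl c := fun c hc =>
    ofReal_integral_eq_lintegral_ofReal (hε_int_c c hc) (hε_nn_c c hc)
  have hG_nonneg : ∀ c : ℝ, 0 ≤ c → 0 ≤ ∫ z in Set.Ioi c, ε z := fun c hc =>
    setIntegral_nonneg measurableSet_Ioi fun z hz => hε_nonneg z (hc.trans (le_of_lt hz))
  have hF_Ioc : ∀ z : ℝ, 0 ≤ z → F z = Freal z := fun z hz => by
    rw [hF z, intervalIntegral.integral_of_le hz]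
  have hf_int_z : ∀ z : ℝ, IntegrableOn f (Set.Ioc 0 z) := fun z =>
    hf_int.mono_set Ioc_subset_Ioi_self
  have hf_nn_z : ∀ z : ℝ, (0:ℝ→ℝ) ≤ᵐ[volume.restrict (Set.Ioc 0 z)] f := fun z =>
    (ae_restrict_iff' measurableSet_Ioc).2 (ae_of_all _ fun c hc => (hf_pos c hc.1.le).le)
  have hFofReal : ∀ z : ℝ, ENNReal.ofReal (Freal z) = Fl z := fun z =>
    ofReal_integral_eq_lintegral_ofReal (hf_int_z z) (hf_nn_z z)
  have hFreal_nonneg : ∀ z : ℝ, 0 ≤ Freal z := fun z =>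
    setIntegral_nonneg measurableSet_Ioc fun c hc => (hf_pos c hc.1.le).le
  have hFreal_le_one : ∀ z : ℝ, Freal z ≤ 1 := fun z => by
    rw [← hf_prob]
    exact setIntegral_mono_set hf_int hf_nn_ae (HasSubset.Subset.eventuallyLE Ioc_subset_Ioi_self)
  have hFreal_mono : Monotone Freal := fun a b hab =>
    setIntegral_mono_set (hf_int_z b) (hf_nn_z b)
      (HasSubset.Subset.eventuallyLE (Set.Ioc_subset_Ioc_right hab))
  have hFreal_meas : Measurable Freal := hFreal_mono.measurable
  have hGl_anti : Antitone Gl := fun a b hab => lintegral_mono_set (Ioi_subset_Ioi hab)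
  have hGl_meas : Measurable Gl := hGl_anti.measurable
  have hGl_toReal : ∀ c : ℝ, 0 ≤ c → (Gl c).toReal = ∫ z in Set.Ioi c, ε z := fun c hc => by
    rw [← hGofReal c hc, ENNReal.toReal_ofReal (hG_nonneg c hc)]
  set M : ℝ := ∫ z in Set.Ioi 0, ε z with hM_def
  have hM_nonneg : 0 ≤ M := hG_nonneg 0 le_rfl
  have hGl_le : ∀ c : ℝ, 0 ≤ c → (Gl c).toReal ≤ M := fun c hc => by
    have h1 : Gl c ≤ Gl 0 := hGl_anti hc
    have h2 : (Gl 0).toReal = M := hGl_toReal 0 le_rfl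
    have h3 : Gl 0 ≠ ⊤ := by
      rw [← hGofReal 0 le_rfl]; exact ENNReal.ofReal_ne_top
    calc (Gl c).toReal ≤ (Gl 0).toReal := ENNReal.toReal_mono h3 h1
      _ = M := h2
  -- integrability of G·f
  have key_int1 : IntegrableOn (fun c => (∫ z in Set.Ioi c, ε z) * f c) (Set.Ioi 0) := by
    have h1 : IntegrableOn (fun c => (Gl c).toReal * f c) (Set.Ioi 0) := by
      refine Integrable.mono (hf_int.const_mul M)
        ((hGl_meas.ennreal_toReal.aemeasurable.aestronglyMeasurable).mul
          hf_int.aestronglyMeasurable) ?_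
      filter_upwards [ae_restrict_mem measurableSet_Ioi] with c hc
      have hc0 : (0:ℝ) ≤ c := le_of_lt hc
      have hfc : 0 ≤ f c := (hf_pos c hc0).le
      rw [Real.norm_eq_abs, Real.norm_eq_abs,
        abs_of_nonneg (mul_nonneg ENNReal.toReal_nonneg hfc)]
      calc (Gl c).toReal * f c ≤ M * f c := mul_le_mul_of_nonneg_right (hGl_le c hc0) hfc
        _ ≤ |M * f c| := le_abs_self _
    refine h1.congr ?_
    filter_upwards [ae_restrict_mem measurableSet_Ioi] with c hc
    rw [hGl_toReal c (le_of_lt hc)]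
  -- integrability of ε·F
  have key_int2 : IntegrableOn (fun z => ε z * F z) (Set.Ioi 0) := by
    have h1 : IntegrableOn (fun z => ε z * Freal z) (Set.Ioi 0) := by
      refine Integrable.mono hε_int
        ((hε_meas.mul hFreal_meas).aestronglyMeasurable) ?_
      filter_upwards [ae_restrict_mem measurableSet_Ioi] with z hz
      have hz0 : (0:ℝ) ≤ z := le_of_lt hz
      rw [Real.norm_eq_abs, Real.norm_eq_abs,
        abs_of_nonneg (mul_nonneg (hε_nonneg z hz0) (hFreal_nonneg z)),
        abs_of_nonneg (hε_nonneg z hz0)]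
      exact mul_le_of_le_one_right (hε_nonneg z hz0) (hFreal_le_one z)
    refine h1.congr ?_
    filter_upwards [ae_restrict_mem measurableSet_Ioi] with z hz
    rw [hF_Ioc z (le_of_lt hz)]
  -- split LHS
  have hL : ∫ c in Set.Ioi 0, π c * f c
      = ((∫ c in Set.Ioi 0, (∫ z in Set.Ioi c, ε z) * f c)
        + ∫ c in Set.Ioi 0, c * ε c * f c) + d := by
    have hcongr : (fun c => π c * f c)
        =ᵐ[volume.restrict (Set.Ioi 0)]
        (fun c => ((∫ z in Set.Ioi c, ε z) * f c + c * ε c * f c) + d * f c) := by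
      filter_upwards [ae_restrict_mem measurableSet_Ioi] with c hc
      rw [hπ c (le_of_lt hc)]; ring
    have hsum : Integrable (fun c => (∫ z in Set.Ioi c, ε z) * f c + c * ε c * f c)
        (volume.restrict (Set.Ioi 0)) := key_int1.add hcε_int
    have hdf : Integrable (fun c => d * f c) (volume.restrict (Set.Ioi 0)) :=
      hf_int.const_mul d
    rw [integral_congr_ae hcongr, integral_add hsum hdf,
      integral_add key_int1 hcε_int, MeasureTheory.integral_const_mul, hf_prob, mul_one]
  -- split RHS
  have hR : ∫ c in Set.Ioi 0, ε c * (c + F c / f c) * f c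
      = (∫ c in Set.Ioi 0, c * ε c * f c) + ∫ c in Set.Ioi 0, ε c * F c := by
    have hcongr : (fun c => ε c * (c + F c / f c) * f c)
        =ᵐ[volume.restrict (Set.Ioi 0)]
        (fun c => c * ε c * f c + ε c * F c) := by
      filter_upwards [ae_restrict_mem measurableSet_Ioi] with c hc
      have hfc : f c ≠ 0 := (hf_pos c (le_of_lt hc)).ne'
      field_simp
    rw [integral_congr_ae hcongr, integral_add hcε_int key_int2]
  -- Fubini in ENNReal
  set g : ℝ → ℝ → ENNReal :=
    fun c z => Set.indicator (Set.Ioi c) (fun z => fe c * εe z) z with hg_def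
  have hεe_meas : Measurable εe := hε_meas.ennreal_ofReal
  have hfe_ae : AEMeasurable fe (volume.restrict (Set.Ioi 0)) :=
    hf_int.aemeasurable.ennreal_ofReal
  have hg_unc : Function.uncurry g
      = Set.indicator {p : ℝ × ℝ | p.1 < p.2} (fun p => fe p.1 * εe p.2) := by
    ext p
    rcases p with ⟨c, z⟩
    by_cases h : c < z
    · simp [Function.uncurry, hg_def, Set.indicator_of_mem, h, Set.mem_Ioi]
    · simp [Function.uncurry, hg_def, Set.indicator_of_notMem, h, Set.mem_Ioi]
  have hunc : AEMeasurable (Function.uncurry g)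
      ((volume.restrict (Set.Ioi 0)).prod (volume.restrict (Set.Ioi 0))) := by
    rw [hg_unc]
    exact AEMeasurable.indicator
      (hfe_ae.comp_fst.mul (hεe_meas.comp measurable_snd).aemeasurable)
      (measurableSet_lt measurable_fst measurable_snd)
  have hswap0 : ∫⁻ c in Set.Ioi 0, (∫⁻ z in Set.Ioi 0, g c z)
      = ∫⁻ z in Set.Ioi 0, (∫⁻ c in Set.Ioi 0, g c z) :=
    lintegral_lintegral_swap hunc
  have hleft : ∫⁻ c in Set.Ioi 0, (∫⁻ z in Set.Ioi 0, g c z)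
      = ∫⁻ c in Set.Ioi 0, fe c * Gl c := by
    refine lintegral_congr_ae ?_
    filter_upwards [ae_restrict_mem measurableSet_Ioi] with c hc
    simp only [hg_def]
    rw [lintegral_indicator measurableSet_Ioi,
      Measure.restrict_restrict measurableSet_Ioi,
      Set.inter_eq_left.mpr (Ioi_subset_Ioi (le_of_lt hc)),
      lintegral_const_mul' _ _ ENNReal.ofReal_ne_top]
  have hright : ∫⁻ z in Set.Ioi 0, (∫⁻ c in Set.Ioi 0, g c z)
      = ∫⁻ z in Set.Ioi 0, εe z * Fl z := by
    refine lintegral_congr_ae ?_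
    filter_upwards [ae_restrict_mem measurableSet_Ioi] with z hz
    have hfun : (fun c => g c z) = Set.indicator (Set.Iio z) (fun c => fe c * εe z) := by
      ext c
      by_cases h : c < z
      · simp [hg_def, Set.indicator, Set.mem_Ioi, Set.mem_Iio, h]
      · simp [hg_def, Set.indicator, Set.mem_Ioi, Set.mem_Iio, h]
    have hset : Set.Iio z ∩ Set.Ioi 0 = Set.Ioo 0 z := by
      ext x; simp [Set.mem_Ioo, and_comm]
    rw [hfun, lintegral_indicator measurableSet_Iio,
      Measure.restrict_restrict measurableSet_Iio, hset,
      Measure.restrict_congr_set Ioo_ae_eq_Ioc,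
      lintegral_mul_const' _ _ ENNReal.ofReal_ne_top, mul_comm]
  -- the key Fubini identity for Bochner integrals
  have key : ∫ c in Set.Ioi 0, (∫ z in Set.Ioi c, ε z) * f c
      = ∫ z in Set.Ioi 0, ε z * F z := by
    have nn1 : (0:ℝ→ℝ) ≤ᵐ[volume.restrict (Set.Ioi 0)]
        (fun c => (∫ z in Set.Ioi c, ε z) * f c) := by
      filter_upwards [ae_restrict_mem measurableSet_Ioi] with c hc
      exact mul_nonneg (hG_nonneg c (le_of_lt hc)) (hf_pos c (le_of_lt hc)).le
    have nn2 : (0:ℝ→ℝ) ≤ᵐ[volume.restrict (Set.Ioi 0)] (fun z => ε z * F z) := by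
      filter_upwards [ae_restrict_mem measurableSet_Ioi] with z hz
      rw [hF_Ioc z (le_of_lt hz)]
      exact mul_nonneg (hε_nonneg z (le_of_lt hz)) (hFreal_nonneg z)
    rw [integral_eq_lintegral_of_nonneg_ae nn1 key_int1.aestronglyMeasurable,
      integral_eq_lintegral_of_nonneg_ae nn2 key_int2.aestronglyMeasurable]
    congr 1
    have e1 : ∫⁻ c in Set.Ioi 0, ENNReal.ofReal ((∫ z in Set.Ioi c, ε z) * f c)
        = ∫⁻ c in Set.Ioi 0, fe c * Gl c := by
      refine lintegral_congr_ae ?_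
      filter_upwards [ae_restrict_mem measurableSet_Ioi] with c hc
      rw [ENNReal.ofReal_mul (hG_nonneg c (le_of_lt hc)), hGofReal c (le_of_lt hc), mul_comm]
    have e2 : ∫⁻ z in Set.Ioi 0, ENNReal.ofReal (ε z * F z)
        = ∫⁻ z in Set.Ioi 0, εe z * Fl z := by
      refine lintegral_congr_ae ?_
      filter_upwards [ae_restrict_mem measurableSet_Ioi] with z hz
      rw [hF_Ioc z (le_of_lt hz), ENNReal.ofReal_mul (hε_nonneg z (le_of_lt hz)), hFofReal z]
    rw [e1, e2, ← hleft, hswap0, hright]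
  rw [hL, hR, key]
  ring
end

section
/- Let v, v' ∈ ℝ^N be two vectors of positive virtual costs agreeing in every coordinate except the i-th, with v'ᵢ > vᵢ. Let (p, ε) be a minimizer of Problem 3 with virtual costs v and let (p', ε') be a minimizer of Problem 3 with virtual costs v'. Then ε'ᵢ ≤ εᵢ; in particular, the optimal privacy budget of client i is weakly decreasing in its virtual cost. -/
open Finset MeasureTheory Real

/-- If `v` and `v'` are positive virtual-cost vectors agreeing
off coordinate `i` with `v'ᵢ > vᵢ`, and `(p, ε)`, `(p', ε')` are minimizers of
Problem 3 with costs `v`, `v'` respectively, then `ε'ᵢ ≤ εᵢ`: the optimal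
privacy budget of client `i` weakly decreases in its virtual cost. -/
theorem budget_monotone_in_virtual_cost
    {N : ℕ} (hN : 2 ≤ N) (η Q : ℝ) (hη : 0 < η) (hQ : 0 < Q)
    (i : Fin N) (v v' : Fin N → ℝ)
    (hv_pos : ∀ k, 0 < v k) (hv'_pos : ∀ k, 0 < v' k)
    (hvv' : ∀ k, k ≠ i → v k = v' k) (hvi : v i < v' i)
    (p ε p' ε' : Fin N → ℝ)
    (hmin : IsMinimizer η Q v p ε) (hmin' : IsMinimizer η Q v' p' ε') :
    ε' i ≤ ε i := by
  have h1 := hmin.2 p' ε' hmin'.1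
  have h2 := hmin'.2 p ε hmin.1
  unfold objG at h1 h2
  have e1 : ∀ e : Fin N → ℝ,
      (∑ k, e k * v' k) - (∑ k, e k * v k) = e i * (v' i - v i) := by
    intro e
    rw [← Finset.sum_sub_distrib, Finset.sum_eq_single i]
    · ring
    · intro k _ hk
      rw [hvv' k hk]; ring
    · intro h; exact absurd (Finset.mem_univ i) h
  have key : ε' i * (v' i - v i) ≤ ε i * (v' i - v i) := by
    rw [← e1 ε', ← e1 ε]; linarith
  have hpos : 0 < v' i - v i := by linarith
  exact le_of_mul_le_mul_right key hpos
end

section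
/- At every minimizer (p*, ε*) of Problem 3, at most one client has selection probability strictly greater than 1/N; that is, the set {k : p*ₖ > 1/N} has cardinality at most one. -/
open Finset MeasureTheory Real

private lemma sum_shift_pair {N : ℕ} {i j : Fin N} (hij : i ≠ j) (f g : Fin N → ℝ)
    (h : ∀ k, k ≠ i → k ≠ j → f k = g k) :
    ∑ k, f k = (∑ k, g k) + (f i - g i) + (f j - g j) := by
  have h1 : ∑ k, (f k - g k) = ∑ k ∈ ({i, j} : Finset (Fin N)), (f k - g k) := by
    refine (Finset.sum_subset (Finset.subset_univ _) ?_).symm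
    intro k _ hk
    simp only [Finset.mem_insert, Finset.mem_singleton, not_or] at hk
    rw [h k hk.1 hk.2, sub_self]
  rw [Finset.sum_sub_distrib, Finset.sum_pair hij] at h1
  linarith

/-- probability vector along the transfer curve -/
private noncomputable def qf {N : ℕ} (p : Fin N → ℝ) (i j : Fin N) (t : ℝ) : Fin N → ℝ :=
  fun k => if k = i then p i - t else if k = j then p j + t else p k

/-- privacy vector along the transfer curve, with coordinate `i` free -/
private noncomputable def ef {N : ℕ} (p ε : Fin N → ℝ) (i j : Fin N) (t x : ℝ) : Fin N → ℝ :=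
  fun k => if k = i then x else if k = j then ε j * (p j + t) / p j else ε k

set_option maxHeartbeats 2000000

/-- At every minimizer of Problem 3 (pairwise distinct positive
virtual costs), at most one client has selection probability strictly greater
than `1/N`. -/
theorem at_most_one_over_selected
    {N : ℕ} (hN : 2 ≤ N) (v : Fin N → ℝ)
    (hv_pos : ∀ k, 0 < v k) (hv_inj : Function.Injective v)
    (η Q : ℝ) (hη : 0 < η) (hQ : 0 < Q)
    (p ε : Fin N → ℝ) (hmin : IsMinimizer η Q v p ε) :
    {k : Fin N | 1 / (N : ℝ) < p k}.Subsingleton := by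
  intro i hi j hj
  by_contra hij
  simp only [Set.mem_setOf_eq] at hi hj
  obtain ⟨⟨hsum, hp0, he0, hpe⟩, hopt⟩ := hmin
  have hN0 : (0:ℝ) < N := by
    have : (2:ℝ) ≤ N := by exact_mod_cast hN
    linarith
  have hNpos : (0:ℝ) < 1 / N := by positivity
  have hpi : 0 < p i := hNpos.trans hi
  have hpj : 0 < p j := hNpos.trans hj
  have hεi : 0 < ε i := hpe i hpi
  have hεj : 0 < ε j := hpe j hpj
  have hij' : j ≠ i := Ne.symm hij
  set δ := min (p i - 1/(N:ℝ)) (p j - 1/(N:ℝ)) with hδdef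
  have hδpos : 0 < δ := lt_min (by linarith) (by linarith)
  have hδi : δ ≤ p i - 1/(N:ℝ) := min_le_left _ _
  have hδj : δ ≤ p j - 1/(N:ℝ) := min_le_right _ _
  set A := ∑ k, |p k - 1 / (N:ℝ)| with hA
  set C₀ := ∑ k, ε k * v k with hC
  set E' := dpError p ε - (p i)^2/(ε i)^2 with hE'def
  have hEi : dpError p ε = E' + (p i)^2/(ε i)^2 := by rw [hE'def]; ring
  have hE'nonneg : 0 ≤ E' := by
    have hterm : (if p i ≠ 0 then (p i)^2/(ε i)^2 else 0) = (p i)^2/(ε i)^2 :=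
      if_pos (ne_of_gt hpi)
    have hd : dpError p ε =
        (p i)^2/(ε i)^2 + ∑ k ∈ Finset.univ.erase i, (if p k ≠ 0 then (p k)^2/(ε k)^2 else 0) := by
      rw [dpError, ← Finset.add_sum_erase _ _ (Finset.mem_univ i), hterm]
    have hs : 0 ≤ ∑ k ∈ Finset.univ.erase i, (if p k ≠ 0 then (p k)^2/(ε k)^2 else 0) :=
      Finset.sum_nonneg fun k _ => by split <;> positivity
    rw [hE'def, hd]; linarith
  -- the master computation
  have master : ∀ t x, |t| < δ → 0 < x →
      Feasible (qf p i j t) (ef p ε i j t x) ∧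
      objG η Q v (qf p i j t) (ef p ε i j t x) =
        η * (A + Real.sqrt (A^2 + Q * (E' + (p i - t)^2 / x^2)))
          + (C₀ + (x - ε i) * v i + t * (ε j * v j / p j)) := by
    intro t x ht hx
    have ht1 : t < p i - 1/(N:ℝ) := lt_of_lt_of_le ((le_abs_self t).trans_lt ht) hδi
    have ht2 : -t < p j - 1/(N:ℝ) := lt_of_lt_of_le ((neg_le_abs t).trans_lt ht) hδj
    have hqi : 1/(N:ℝ) < p i - t := by linarith
    have hqj : 1/(N:ℝ) < p j + t := by linarith
    have hqip : 0 < p i - t := hNpos.trans hqi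
    have hqjp : 0 < p j + t := hNpos.trans hqj
    have hqfi : qf p i j t i = p i - t := by simp [qf]
    have hqfj : qf p i j t j = p j + t := by simp [qf, hij']
    have hefi : ef p ε i j t x i = x := by simp [ef]
    have hefj : ef p ε i j t x j = ε j * (p j + t) / p j := by simp [ef, hij']
    have e1 : p i - t ≠ 0 := ne_of_gt hqip
    have e2 : p j + t ≠ 0 := ne_of_gt hqjp
    have e3 : p i ≠ 0 := ne_of_gt hpi
    have e4 : p j ≠ 0 := ne_of_gt hpj
    have e5 : ε j ≠ 0 := ne_of_gt hεj
    have e6 : ε i ≠ 0 := ne_of_gt hεi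
    constructor
    · refine ⟨?_, ?_, ?_, ?_⟩
      · rw [sum_shift_pair hij _ p (fun k h1 h2 => by simp [qf, h1, h2])]
        rw [hqfi, hqfj, hsum]; ring
      · intro k
        rcases eq_or_ne k i with rfl | h1
        · rw [hqfi]; linarith
        rcases eq_or_ne k j with rfl | h2
        · rw [hqfj]; linarith
        · simpa [qf, h1, h2] using hp0 k
      · intro k
        rcases eq_or_ne k i with rfl | h1
        · rw [hefi]; exact hx.le
        rcases eq_or_ne k j with rfl | h2
        · rw [hefj]; exact (div_pos (mul_pos hεj hqjp) hpj).le
        · simpa [ef, h1, h2] using he0 k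
      · intro k hk
        rcases eq_or_ne k i with rfl | h1
        · rw [hefi]; exact hx
        rcases eq_or_ne k j with rfl | h2
        · rw [hefj]; exact div_pos (mul_pos hεj hqjp) hpj
        · rw [show ef p ε i j t x k = ε k by simp [ef, h1, h2]]
          exact hpe k (by simpa [qf, h1, h2] using hk)
    · rw [objG]
      have hL1 : (∑ k, |qf p i j t k - 1 / (N:ℝ)|) = A := by
        rw [sum_shift_pair hij _ (fun k => |p k - 1 / (N:ℝ)|)
          (fun k h1 h2 => by simp [qf, h1, h2])]
        rw [hqfi, hqfj, ← hA,
          abs_of_nonneg (by linarith : (0:ℝ) ≤ p i - t - 1/(N:ℝ)),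
          abs_of_nonneg (by linarith : (0:ℝ) ≤ p j + t - 1/(N:ℝ)),
          abs_of_nonneg (by linarith : (0:ℝ) ≤ p i - 1/(N:ℝ)),
          abs_of_nonneg (by linarith : (0:ℝ) ≤ p j - 1/(N:ℝ))]
        ring
      have hdp : dpError (qf p i j t) (ef p ε i j t x) = E' + (p i - t)^2 / x^2 := by
        rw [dpError]
        rw [sum_shift_pair hij _ (fun k => if p k ≠ 0 then (p k)^2/(ε k)^2 else 0)
          (fun k h1 h2 => by simp [qf, ef, h1, h2])]
        have hfold : (∑ k, if p k ≠ 0 then (p k)^2/(ε k)^2 else 0) = dpError p ε := rfl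
        rw [hfold, hqfi, hqfj, hefi, hefj, hEi,
          if_pos e1, if_pos e2, if_pos e3, if_pos e4]
        have hfj : (p j + t)^2 / (ε j * (p j + t) / p j)^2 = (p j)^2/(ε j)^2 := by
          rw [div_pow, mul_pow]
          field_simp
        rw [hfj]; ring
      have hcost : (∑ k, ef p ε i j t x k * v k)
          = C₀ + (x - ε i) * v i + t * (ε j * v j / p j) := by
        rw [sum_shift_pair hij _ (fun k => ε k * v k)
          (fun k h1 h2 => by simp [ef, h1, h2])]
        rw [hefi, hefj, ← hC]
        field_simp
        ring
      rw [hL1, hdp, hcost]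
  -- the objective is affine along the transfer curve
  have hcurve : ∀ t, |t| < δ →
      objG η Q v (qf p i j t) (ef p ε i j t (ε i * (p i - t) / p i)) =
        objG η Q v p ε + t * (ε j * v j / p j - ε i * v i / p i) := by
    intro t ht
    have ht1 : t < p i - 1/(N:ℝ) := lt_of_lt_of_le ((le_abs_self t).trans_lt ht) hδi
    have hqip : 0 < p i - t := by linarith
    have hx : 0 < ε i * (p i - t) / p i := div_pos (mul_pos hεi hqip) hpi
    rw [(master t (ε i * (p i - t) / p i) ht hx).2]
    have hxx : (p i - t)^2 / (ε i * (p i - t)/p i)^2 = (p i)^2/(ε i)^2 := by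
      rw [div_pow, mul_pow]
      field_simp
    rw [hxx]
    conv_rhs => rw [objG]
    rw [← hA, ← hC, hEi]
    have hq1 : (ε i * (p i - t)/p i - ε i) * v i = -(t * (ε i * v i / p i)) := by
      field_simp; ring
    have hq2 : t * (ε j * v j / p j - ε i * v i / p i)
        = t * (ε j * v j / p j) - t * (ε i * v i / p i) := by ring
    linarith [hq1, hq2]
  -- the slope of the objective along the curve vanishes
  have habs1 : |δ/2| < δ := by
    rw [abs_of_pos (by linarith)]; linarith
  have habs2 : |(-(δ/2))| < δ := by
    rw [abs_neg, abs_of_pos (by linarith)]; linarith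
  have habs0 : |(0:ℝ)| < δ := by simpa using hδpos
  have hx1 : 0 < ε i * (p i - δ/2) / p i :=
    div_pos (mul_pos hεi (by have := hNpos; linarith)) hpi
  have hx2 : 0 < ε i * (p i - -(δ/2)) / p i :=
    div_pos (mul_pos hεi (by linarith)) hpi
  have h1 := hopt _ _ (master (δ/2) (ε i * (p i - δ/2) / p i) habs1 hx1).1
  rw [hcurve (δ/2) habs1] at h1
  have h2 := hopt _ _ (master (-(δ/2)) (ε i * (p i - -(δ/2)) / p i) habs2 hx2).1
  rw [hcurve (-(δ/2)) habs2] at h2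
  have h1' : 0 ≤ δ/2 * (ε j * v j / p j - ε i * v i / p i) := by linarith
  have h2' : 0 ≤ -(δ/2) * (ε j * v j / p j - ε i * v i / p i) := by linarith
  have hc : ε j * v j / p j - ε i * v i / p i = 0 := by
    rcases lt_trichotomy (ε j * v j / p j - ε i * v i / p i) 0 with h | h | h
    · exfalso; nlinarith [h1', hδpos]
    · exact h
    · exfalso; nlinarith [h2', hδpos]
  -- minimality of the two configurations at t = 0 and t = δ/2
  have hmin0 : ∀ q' e', Feasible q' e' →
      objG η Q v (qf p i j 0) (ef p ε i j 0 (ε i * (p i - 0) / p i)) ≤ objG η Q v q' e' := by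
    intro q' e' hf
    rw [hcurve 0 habs0, hc, mul_zero, add_zero]
    exact hopt q' e' hf
  have hmin1 : ∀ q' e', Feasible q' e' →
      objG η Q v (qf p i j (δ/2)) (ef p ε i j (δ/2) (ε i * (p i - δ/2) / p i)) ≤
        objG η Q v q' e' := by
    intro q' e' hf
    rw [hcurve (δ/2) habs1, hc, mul_zero, add_zero]
    exact hopt q' e' hf
  -- reduce to a one-dimensional variational statement
  set y₀ := ε i / p i with hy₀def
  have hy₀pos : 0 < y₀ := div_pos hεi hpi
  set K := A^2 + Q * E' with hKdef
  have keyineq : ∀ t : ℝ, |t| < δ →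
      (∀ q' e', Feasible q' e' →
        objG η Q v (qf p i j t) (ef p ε i j t (ε i * (p i - t) / p i)) ≤ objG η Q v q' e') →
      ∀ y, 0 < y →
        η * Real.sqrt (K + Q / y₀^2) + v i * (p i - t) * y₀ ≤
          η * Real.sqrt (K + Q / y^2) + v i * (p i - t) * y := by
    intro t ht hminT y hy
    have ht1 : t < p i - 1/(N:ℝ) := lt_of_lt_of_le ((le_abs_self t).trans_lt ht) hδi
    have hat : 0 < p i - t := by linarith
    have hx0 : 0 < ε i * (p i - t) / p i := div_pos (mul_pos hεi hat) hpi
    have hxy : 0 < (p i - t) * y := mul_pos hat hy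
    have h := hminT _ _ (master t ((p i - t) * y) ht hxy).1
    rw [(master t (ε i * (p i - t) / p i) ht hx0).2,
      (master t ((p i - t) * y) ht hxy).2] at h
    have e1 : (p i - t)^2 / ((p i - t) * y)^2 = 1 / y^2 := by
      rw [mul_pow]
      field_simp
    have e2 : (p i - t)^2 / (ε i * (p i - t) / p i)^2 = 1 / y₀^2 := by
      rw [hy₀def, div_pow, mul_pow]
      field_simp
    rw [e1, e2] at h
    have e4 : ∀ z : ℝ, A^2 + Q * (E' + 1/z^2) = K + Q/z^2 := fun z => by rw [hKdef]; ring
    rw [e4 y₀, e4 y] at h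
    have d0 : η * (A + Real.sqrt (K + Q / y₀^2))
        = η * A + η * Real.sqrt (K + Q / y₀^2) := by ring
    have d1 : η * (A + Real.sqrt (K + Q / y^2))
        = η * A + η * Real.sqrt (K + Q / y^2) := by ring
    have q0 : (ε i * (p i - t) / p i - ε i) * v i
        = v i * (p i - t) * y₀ - ε i * v i := by
      rw [hy₀def]; field_simp
    have q2 : ((p i - t) * y - ε i) * v i = v i * (p i - t) * y - ε i * v i := by ring
    linarith [h, d0, d1, q0, q2]
  have key0 := keyineq 0 habs0 hmin0
  have key1 := keyineq (δ/2) habs1 hmin1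
  -- calculus: the same point cannot be a critical point for two different slopes
  have hKnn : 0 ≤ K := by
    rw [hKdef]
    exact add_nonneg (sq_nonneg A) (mul_nonneg hQ.le hE'nonneg)
  have hKpos : 0 < K + Q / y₀^2 := by
    have : 0 < Q / y₀^2 := by positivity
    linarith
  have hsq : HasDerivAt (fun z : ℝ => z ^ 2) (2 * y₀) y₀ := by
    simpa using hasDerivAt_pow 2 y₀
  have hd2 : HasDerivAt (fun z : ℝ => (z^2)⁻¹) (-(2 * y₀) / (y₀^2)^2) y₀ :=
    hsq.inv (by positivity)
  have hd3 : HasDerivAt (fun z : ℝ => K + Q * (z^2)⁻¹) (Q * (-(2 * y₀) / (y₀^2)^2)) y₀ := by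
    exact (hd2.const_mul Q).const_add K
  have hd4 : HasDerivAt (fun z : ℝ => K + Q / z^2) (Q * (-(2 * y₀) / (y₀^2)^2)) y₀ := by
    simpa only [div_eq_mul_inv] using hd3
  have hd5 := (hd4.sqrt (ne_of_gt hKpos)).const_mul η
  have hderiv : ∀ c : ℝ,
      HasDerivAt (fun z : ℝ => η * Real.sqrt (K + Q / z^2) + c * z)
        (η * (Q * (-(2 * y₀) / (y₀^2)^2) / (2 * Real.sqrt (K + Q / y₀^2))) + c) y₀ := by
    intro c
    have hc : HasDerivAt (fun z : ℝ => c * z) c y₀ := by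
      simpa using (hasDerivAt_id y₀).const_mul c
    exact hd5.add hc
  have hloc : ∀ t : ℝ,
      (∀ y, 0 < y →
        η * Real.sqrt (K + Q / y₀^2) + v i * (p i - t) * y₀ ≤
          η * Real.sqrt (K + Q / y^2) + v i * (p i - t) * y) →
      IsLocalMin (fun z : ℝ => η * Real.sqrt (K + Q / z^2) + (v i * (p i - t)) * z) y₀ := by
    intro t hkey
    have hmem : Set.Ioi (0:ℝ) ∈ nhds y₀ := Ioi_mem_nhds hy₀pos
    refine Filter.eventually_of_mem hmem ?_
    intro y hy
    exact hkey y hy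
  have hz0 := (hloc 0 key0).hasDerivAt_eq_zero (hderiv (v i * (p i - 0)))
  have hz1 := (hloc (δ/2) key1).hasDerivAt_eq_zero (hderiv (v i * (p i - δ/2)))
  have h9 : v i * (p i - 0) = v i * (p i - δ/2) := by linarith
  have h10 : 0 < v i * (δ/2) := mul_pos (hv_pos i) (by linarith)
  nlinarith [h9, h10]
end

section
/- At every minimizer (p*, ε*) of Problem 3, at most one client has selection probability strictly between 0 and 1/N; that is, the set {k : 0 < p*ₖ < 1/N} has cardinality at most one. -/
open Finset MeasureTheory Real

lemma mid_rpow {a d : ℝ} (hd : 0 < d) (h : d < a) :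
    (a - d) ^ (2/3 : ℝ) + (a + d) ^ (2/3 : ℝ) < 2 * a ^ (2/3 : ℝ) := by
  have h1 : (0:ℝ) ≤ a - d := by linarith
  have h2 : (0:ℝ) ≤ a + d := by linarith
  have := (Real.strictConcaveOn_rpow (by norm_num : (0:ℝ) < 2/3)
      (by norm_num : (2/3:ℝ) < 1)).2 (Set.mem_Ici.2 h1) (Set.mem_Ici.2 h2)
      (by intro hh; nlinarith) (by norm_num : (0:ℝ) < 1/2) (by norm_num : (0:ℝ) < 1/2)
      (by norm_num)
  have he : (1/2 : ℝ) • (a - d) + (1/2 : ℝ) • (a + d) = a := by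
    simp only [smul_eq_mul]; ring
  rw [he] at this
  simp only [smul_eq_mul] at this
  linarith

lemma sqrt_chain {a b c : ℝ} (ha : 0 ≤ a) (hb : 0 ≤ b) (h : a + b < 2 * c) :
    Real.sqrt a + Real.sqrt b < 2 * Real.sqrt c := by
  have hc : 0 ≤ c := by linarith
  have hnn : 0 ≤ Real.sqrt a + Real.sqrt b := by positivity
  have hsq : (Real.sqrt a + Real.sqrt b) ^ 2 ≤ 2 * (a + b) := by
    have h2 : 2 * Real.sqrt a * Real.sqrt b ≤ a + b := by
      nlinarith [Real.sq_sqrt ha, Real.sq_sqrt hb, two_mul_le_add_sq (Real.sqrt a) (Real.sqrt b)]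
    nlinarith [Real.sq_sqrt ha, Real.sq_sqrt hb]
  have h1 : Real.sqrt a + Real.sqrt b ≤ Real.sqrt (2 * (a + b)) := by
    calc Real.sqrt a + Real.sqrt b = Real.sqrt ((Real.sqrt a + Real.sqrt b) ^ 2) :=
          (Real.sqrt_sq hnn).symm
      _ ≤ Real.sqrt (2 * (a + b)) := Real.sqrt_le_sqrt hsq
  have h2 : Real.sqrt (2 * (a + b)) < Real.sqrt (2 ^ 2 * c) := by
    apply Real.sqrt_lt_sqrt (by linarith)
    nlinarith
  have h3 : Real.sqrt (2 ^ 2 * c) = 2 * Real.sqrt c := by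
    rw [Real.sqrt_mul (by positivity), Real.sqrt_sq (by norm_num)]
  linarith

lemma scale_dp {x pk e : ℝ} (hx : 0 < x) (hp : 0 < pk) (he : 0 < e) :
    x ^ 2 / (e * (x / pk) ^ (2/3 : ℝ)) ^ 2 = (pk ^ (4/3 : ℝ) / e ^ 2) * x ^ (2/3 : ℝ) := by
  have h1 : ((x / pk) ^ (2/3 : ℝ)) ^ 2 = x ^ (4/3 : ℝ) / pk ^ (4/3 : ℝ) := by
    rw [Real.div_rpow hx.le hp.le, div_pow, ← Real.rpow_natCast (x ^ (2/3:ℝ)) 2,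
      ← Real.rpow_natCast (pk ^ (2/3:ℝ)) 2, ← Real.rpow_mul hx.le, ← Real.rpow_mul hp.le]
    norm_num
  have hx43 : (0:ℝ) < x ^ (4/3 : ℝ) := Real.rpow_pos_of_pos hx _
  have hp43 : (0:ℝ) < pk ^ (4/3 : ℝ) := Real.rpow_pos_of_pos hp _
  have hx2 : x ^ 2 = x ^ (4/3 : ℝ) * x ^ (2/3 : ℝ) := by
    rw [← Real.rpow_natCast x 2, ← Real.rpow_add hx]; norm_num
  rw [mul_pow, h1, hx2]
  field_simp

lemma scale_cost {x pk e vk : ℝ} (hx : 0 ≤ x) (hp : 0 < pk) :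
    (e * (x / pk) ^ (2/3 : ℝ)) * vk = (e * vk / pk ^ (2/3 : ℝ)) * x ^ (2/3 : ℝ) := by
  rw [Real.div_rpow hx hp.le]
  have : (0:ℝ) < pk ^ (2/3 : ℝ) := Real.rpow_pos_of_pos hp _
  field_simp

lemma objG_scaled_eval {N : ℕ} (η Q : ℝ) (v p ε : Fin N → ℝ) {i j : Fin N} (hij : i ≠ j)
    (hpi : 0 < p i) (hpj : 0 < p j) (hei : 0 < ε i) (hej : 0 < ε j)
    {t : ℝ} (ht : 0 < t) (htN : t < 1 / (N : ℝ)) (hs : 0 < p i + p j - t)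
    (hsN : p i + p j - t < 1 / (N : ℝ)) :
    objG η Q v (fun k => if k = i then t else if k = j then p i + p j - t else p k)
      (fun k => if k = i then ε i * (t / p i) ^ (2/3 : ℝ)
        else if k = j then ε j * ((p i + p j - t) / p j) ^ (2/3 : ℝ) else ε k)
    = η * ((2 / (N:ℝ) - (p i + p j) + ∑ k ∈ (univ.erase i).erase j, |p k - 1/(N:ℝ)|) +
        Real.sqrt ((2 / (N:ℝ) - (p i + p j) + ∑ k ∈ (univ.erase i).erase j, |p k - 1/(N:ℝ)|) ^ 2 +
          Q * ((p i ^ (4/3:ℝ) / ε i ^ 2) * t ^ (2/3:ℝ) +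
               (p j ^ (4/3:ℝ) / ε j ^ 2) * (p i + p j - t) ^ (2/3:ℝ) +
               ∑ k ∈ (univ.erase i).erase j, (if p k ≠ 0 then p k ^ 2 / ε k ^ 2 else 0)))) +
      ((ε i * v i / p i ^ (2/3:ℝ)) * t ^ (2/3:ℝ) +
       (ε j * v j / p j ^ (2/3:ℝ)) * (p i + p j - t) ^ (2/3:ℝ) +
       ∑ k ∈ (univ.erase i).erase j, ε k * v k) := by
  classical
  set q : Fin N → ℝ := fun k => if k = i then t else if k = j then p i + p j - t else p k with hq
  set e : Fin N → ℝ := fun k => if k = i then ε i * (t / p i) ^ (2/3 : ℝ)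
        else if k = j then ε j * ((p i + p j - t) / p j) ^ (2/3 : ℝ) else ε k with he
  have hsplit : ∀ g : Fin N → ℝ, ∑ k, g k = g i + g j + ∑ k ∈ (univ.erase i).erase j, g k := by
    intro g
    rw [← Finset.add_sum_erase _ g (Finset.mem_univ i),
        ← Finset.add_sum_erase _ g (Finset.mem_erase.2 ⟨Ne.symm hij, Finset.mem_univ j⟩),
        ← add_assoc]
  have hmem : ∀ k ∈ (univ.erase i).erase j, k ≠ i ∧ k ≠ j := by
    intro k hk
    have h1 := Finset.mem_erase.1 hk
    have h2 := Finset.mem_erase.1 h1.2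
    exact ⟨h2.1, h1.1⟩
  have hqi : q i = t := by simp [hq]
  have hqj : q j = p i + p j - t := by simp [hq, Ne.symm hij]
  have hqs : ∀ k ∈ (univ.erase i).erase j, q k = p k := by
    intro k hk; obtain ⟨h1, h2⟩ := hmem k hk; simp [hq, h1, h2]
  have hei' : e i = ε i * (t / p i) ^ (2/3 : ℝ) := by simp [he]
  have hej' : e j = ε j * ((p i + p j - t) / p j) ^ (2/3 : ℝ) := by simp [he, Ne.symm hij]
  have hes : ∀ k ∈ (univ.erase i).erase j, e k = ε k := by
    intro k hk; obtain ⟨h1, h2⟩ := hmem k hk; simp [he, h1, h2]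
  have h1 : (∑ k, |q k - 1/(N:ℝ)|) =
      2 / (N:ℝ) - (p i + p j) + ∑ k ∈ (univ.erase i).erase j, |p k - 1/(N:ℝ)| := by
    rw [hsplit (fun k => |q k - 1/(N:ℝ)|)]
    have e1 : |q i - 1/(N:ℝ)| = 1/(N:ℝ) - t := by
      rw [hqi, abs_of_nonpos (by linarith)]; ring
    have e2 : |q j - 1/(N:ℝ)| = 1/(N:ℝ) - (p i + p j - t) := by
      rw [hqj, abs_of_nonpos (by linarith)]; ring
    rw [e1, e2, Finset.sum_congr rfl (fun k hk => by rw [hqs k hk])]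
    ring
  have h2 : dpError q e =
      (p i ^ (4/3:ℝ) / ε i ^ 2) * t ^ (2/3:ℝ) +
      (p j ^ (4/3:ℝ) / ε j ^ 2) * (p i + p j - t) ^ (2/3:ℝ) +
      ∑ k ∈ (univ.erase i).erase j, (if p k ≠ 0 then p k ^ 2 / ε k ^ 2 else 0) := by
    unfold dpError
    rw [hsplit (fun k => if q k ≠ 0 then q k ^ 2 / e k ^ 2 else 0)]
    have e1 : (if q i ≠ 0 then q i ^ 2 / e i ^ 2 else 0) =
        (p i ^ (4/3:ℝ) / ε i ^ 2) * t ^ (2/3:ℝ) := by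
      rw [if_pos (by rw [hqi]; exact ht.ne'), hqi, hei']
      exact scale_dp ht hpi hei
    have e2 : (if q j ≠ 0 then q j ^ 2 / e j ^ 2 else 0) =
        (p j ^ (4/3:ℝ) / ε j ^ 2) * (p i + p j - t) ^ (2/3:ℝ) := by
      rw [if_pos (by rw [hqj]; exact hs.ne'), hqj, hej']
      exact scale_dp hs hpj hej
    rw [e1, e2, Finset.sum_congr rfl (fun k hk => by rw [hqs k hk, hes k hk])]
  have h3 : (∑ k, e k * v k) =
      (ε i * v i / p i ^ (2/3:ℝ)) * t ^ (2/3:ℝ) +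
      (ε j * v j / p j ^ (2/3:ℝ)) * (p i + p j - t) ^ (2/3:ℝ) +
      ∑ k ∈ (univ.erase i).erase j, ε k * v k := by
    rw [hsplit (fun k => e k * v k)]
    rw [hei', hej', Finset.sum_congr rfl (fun k hk => by rw [hes k hk]),
      scale_cost ht.le hpi, scale_cost hs.le hpj]
  unfold objG
  rw [h1, h2, h3]


set_option maxHeartbeats 1600000 in
/-- At every minimizer of Problem 3 (pairwise distinct positive
virtual costs), at most one client has selection probability strictly between
`0` and `1/N`. -/
theorem at_most_one_under_selected
    {N : ℕ} (hN : 2 ≤ N) (v : Fin N → ℝ)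
    (hv_pos : ∀ k, 0 < v k) (hv_inj : Function.Injective v)
    (η Q : ℝ) (hη : 0 < η) (hQ : 0 < Q)
    (p ε : Fin N → ℝ) (hmin : IsMinimizer η Q v p ε) :
    {k : Fin N | 0 < p k ∧ p k < 1 / (N : ℝ)}.Subsingleton := by
  intro i hi j hj
  by_contra hne
  obtain ⟨hpi, hpiN⟩ := hi
  obtain ⟨hpj, hpjN⟩ := hj
  obtain ⟨⟨hsum, hp0, he0, hpe⟩, hopt⟩ := hmin
  have hei : 0 < ε i := hpe i hpi
  have hej : 0 < ε j := hpe j hpj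
  set δ := min (min (p i) (p j)) (min (1/(N:ℝ) - p i) (1/(N:ℝ) - p j)) / 2 with hδdef
  have hMle1 : min (min (p i) (p j)) (min (1/(N:ℝ) - p i) (1/(N:ℝ) - p j)) ≤ p i :=
    le_trans (min_le_left _ _) (min_le_left _ _)
  have hMle2 : min (min (p i) (p j)) (min (1/(N:ℝ) - p i) (1/(N:ℝ) - p j)) ≤ p j :=
    le_trans (min_le_left _ _) (min_le_right _ _)
  have hMle3 : min (min (p i) (p j)) (min (1/(N:ℝ) - p i) (1/(N:ℝ) - p j)) ≤ 1/(N:ℝ) - p i :=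
    le_trans (min_le_right _ _) (min_le_left _ _)
  have hMle4 : min (min (p i) (p j)) (min (1/(N:ℝ) - p i) (1/(N:ℝ) - p j)) ≤ 1/(N:ℝ) - p j :=
    le_trans (min_le_right _ _) (min_le_right _ _)
  have hMpos : 0 < min (min (p i) (p j)) (min (1/(N:ℝ) - p i) (1/(N:ℝ) - p j)) :=
    lt_min (lt_min hpi hpj) (lt_min (by linarith) (by linarith))
  have hδ : 0 < δ := by rw [hδdef]; positivity
  have hd1 : δ < p i := by rw [hδdef]; linarith
  have hd2 : δ < p j := by rw [hδdef]; linarith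
  have hd3 : δ < 1/(N:ℝ) - p i := by rw [hδdef]; linarith
  have hd4 : δ < 1/(N:ℝ) - p j := by rw [hδdef]; linarith
  clear hδdef hMle1 hMle2 hMle3 hMle4 hMpos
  -- sum splitting
  have hsplit : ∀ g : Fin N → ℝ, ∑ k, g k = g i + g j + ∑ k ∈ (univ.erase i).erase j, g k := by
    intro g
    rw [← Finset.add_sum_erase _ g (Finset.mem_univ i),
        ← Finset.add_sum_erase _ g (Finset.mem_erase.2 ⟨Ne.symm hne, Finset.mem_univ j⟩),
        ← add_assoc]
  have hmem : ∀ k ∈ (univ.erase i).erase j, k ≠ i ∧ k ≠ j := by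
    intro k hk
    have h1 := Finset.mem_erase.1 hk
    have h2 := Finset.mem_erase.1 h1.2
    exact ⟨h2.1, h1.1⟩
  -- feasibility of competitors
  have hfeas : ∀ t : ℝ, 0 < t → 0 < p i + p j - t →
      Feasible (fun k => if k = i then t else if k = j then p i + p j - t else p k)
        (fun k => if k = i then ε i * (t / p i) ^ (2/3 : ℝ)
          else if k = j then ε j * ((p i + p j - t) / p j) ^ (2/3 : ℝ) else ε k) := by
    intro t ht hct
    refine ⟨?_, ?_, ?_, ?_⟩
    · have hgi : (fun k => if k = i then t else if k = j then p i + p j - t else p k) i = t := by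
        simp
      have hgj : (fun k => if k = i then t else if k = j then p i + p j - t else p k) j =
          p i + p j - t := by simp [Ne.symm hne]
      have hrest2 : ∑ k ∈ (univ.erase i).erase j,
          (if k = i then t else if k = j then p i + p j - t else p k) =
          ∑ k ∈ (univ.erase i).erase j, p k := by
        refine Finset.sum_congr rfl fun k hk => ?_
        obtain ⟨h1, h2⟩ := hmem k hk
        simp [h1, h2]
      have := hsplit p
      rw [hsum] at this
      rw [hsplit]
      rw [if_pos rfl, if_neg (show ¬(j = i) from Ne.symm hne), if_pos rfl, hrest2]
      linarith
    · intro k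
      dsimp only
      by_cases h1 : k = i
      · rw [if_pos h1]; linarith
      · rw [if_neg h1]
        by_cases h2 : k = j
        · rw [if_pos h2]; linarith
        · rw [if_neg h2]; exact hp0 k
    · intro k
      dsimp only
      by_cases h1 : k = i
      · rw [if_pos h1]; positivity
      · rw [if_neg h1]
        by_cases h2 : k = j
        · rw [if_pos h2]; positivity
        · rw [if_neg h2]; exact he0 k
    · intro k hk
      dsimp only at hk ⊢
      by_cases h1 : k = i
      · rw [if_pos h1]
        exact mul_pos hei (Real.rpow_pos_of_pos (div_pos ht hpi) _)
      · rw [if_neg h1]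
        by_cases h2 : k = j
        · rw [if_pos h2]
          exact mul_pos hej (Real.rpow_pos_of_pos (div_pos hct hpj) _)
        · rw [if_neg h2]
          rw [if_neg h1, if_neg h2] at hk
          exact hpe k hk
  -- the base point is the competitor at t = p i
  have hq0 : (fun k => if k = i then p i else if k = j then p i + p j - p i else p k) = p := by
    funext k
    by_cases h1 : k = i
    · rw [if_pos h1, h1]
    · rw [if_neg h1]
      by_cases h2 : k = j
      · rw [if_pos h2, h2]; ring
      · rw [if_neg h2]
  have he0' : (fun k => if k = i then ε i * (p i / p i) ^ (2/3 : ℝ)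
      else if k = j then ε j * ((p i + p j - p i) / p j) ^ (2/3 : ℝ) else ε k) = ε := by
    funext k
    by_cases h1 : k = i
    · rw [if_pos h1, div_self hpi.ne', Real.one_rpow, mul_one, h1]
    · rw [if_neg h1]
      by_cases h2 : k = j
      · rw [if_pos h2, show p i + p j - p i = p j by ring, div_self hpj.ne',
          Real.one_rpow, mul_one, h2]
      · rw [if_neg h2]
  -- evaluations
  have E0 := objG_scaled_eval η Q v p ε hne hpi hpj hei hej (t := p i) hpi hpiN
    (by linarith) (by linarith)
  have Em := objG_scaled_eval η Q v p ε hne hpi hpj hei hej (t := p i - δ)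
    (by linarith) (by linarith) (by linarith) (by linarith)
  have Ep := objG_scaled_eval η Q v p ε hne hpi hpj hei hej (t := p i + δ)
    (by linarith) (by linarith) (by linarith) (by linarith)
  rw [hq0, he0'] at E0
  set K := 2 / (N:ℝ) - (p i + p j) + ∑ k ∈ (univ.erase i).erase j, |p k - 1/(N:ℝ)| with hK
  set A := p i ^ (4/3:ℝ) / ε i ^ 2 with hA
  set B := p j ^ (4/3:ℝ) / ε j ^ 2 with hB
  set R := ∑ k ∈ (univ.erase i).erase j, (if p k ≠ 0 then p k ^ 2 / ε k ^ 2 else 0) with hR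
  set g1 := ε i * v i / p i ^ (2/3:ℝ) with hg1
  set g2 := ε j * v j / p j ^ (2/3:ℝ) with hg2
  set CC := ∑ k ∈ (univ.erase i).erase j, ε k * v k with hCC
  have hApos : 0 < A := by rw [hA]; positivity
  have hBpos : 0 < B := by rw [hB]; positivity
  have hg1pos : 0 < g1 := by
    have := hv_pos i
    rw [hg1]; positivity
  have hg2pos : 0 < g2 := by
    have := hv_pos j
    rw [hg2]; positivity
  have hRpos : 0 ≤ R := by
    rw [hR]
    refine Finset.sum_nonneg fun k _ => ?_
    by_cases h : p k ≠ 0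
    · rw [if_pos h]; positivity
    · rw [if_neg h]
  -- optimality inequalities
  have L1 : objG η Q v p ε ≤
      η * (K + Real.sqrt (K ^ 2 + Q * (A * (p i - δ) ^ (2/3:ℝ) +
        B * (p i + p j - (p i - δ)) ^ (2/3:ℝ) + R))) +
      (g1 * (p i - δ) ^ (2/3:ℝ) + g2 * (p i + p j - (p i - δ)) ^ (2/3:ℝ) + CC) := by
    rw [← Em]
    exact hopt _ _ (hfeas _ (by linarith) (by linarith))
  have L2 : objG η Q v p ε ≤
      η * (K + Real.sqrt (K ^ 2 + Q * (A * (p i + δ) ^ (2/3:ℝ) +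
        B * (p i + p j - (p i + δ)) ^ (2/3:ℝ) + R))) +
      (g1 * (p i + δ) ^ (2/3:ℝ) + g2 * (p i + p j - (p i + δ)) ^ (2/3:ℝ) + CC) := by
    rw [← Ep]
    exact hopt _ _ (hfeas _ (by linarith) (by linarith))
  -- strict concavity facts
  have c1 : (p i - δ) ^ (2/3:ℝ) + (p i + δ) ^ (2/3:ℝ) < 2 * (p i) ^ (2/3:ℝ) :=
    mid_rpow hδ hd1
  have c2 : (p i + p j - (p i + δ)) ^ (2/3:ℝ) + (p i + p j - (p i - δ)) ^ (2/3:ℝ) <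
      2 * (p i + p j - p i) ^ (2/3:ℝ) := by
    rw [show p i + p j - (p i + δ) = p j - δ by ring,
      show p i + p j - (p i - δ) = p j + δ by ring,
      show p i + p j - p i = p j by ring]
    exact mid_rpow hδ hd2
  have hw : (A * (p i - δ) ^ (2/3:ℝ) + B * (p i + p j - (p i - δ)) ^ (2/3:ℝ) + R) +
      (A * (p i + δ) ^ (2/3:ℝ) + B * (p i + p j - (p i + δ)) ^ (2/3:ℝ) + R) <
      2 * (A * (p i) ^ (2/3:ℝ) + B * (p i + p j - p i) ^ (2/3:ℝ) + R) := by
    linarith [mul_lt_mul_of_pos_left c1 hApos, mul_lt_mul_of_pos_left c2 hBpos]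
  have hwm : 0 ≤ A * (p i - δ) ^ (2/3:ℝ) + B * (p i + p j - (p i - δ)) ^ (2/3:ℝ) + R := by
    have h1 : (0:ℝ) ≤ (p i - δ) ^ (2/3:ℝ) := Real.rpow_nonneg (by linarith) _
    have h2 : (0:ℝ) ≤ (p i + p j - (p i - δ)) ^ (2/3:ℝ) := Real.rpow_nonneg (by linarith) _
    linarith [mul_nonneg hApos.le h1, mul_nonneg hBpos.le h2]
  have hwp : 0 ≤ A * (p i + δ) ^ (2/3:ℝ) + B * (p i + p j - (p i + δ)) ^ (2/3:ℝ) + R := by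
    have h1 : (0:ℝ) ≤ (p i + δ) ^ (2/3:ℝ) := Real.rpow_nonneg (by linarith) _
    have h2 : (0:ℝ) ≤ (p i + p j - (p i + δ)) ^ (2/3:ℝ) := Real.rpow_nonneg (by linarith) _
    linarith [mul_nonneg hApos.le h1, mul_nonneg hBpos.le h2]
  have hsq : Real.sqrt (K ^ 2 + Q * (A * (p i - δ) ^ (2/3:ℝ) +
        B * (p i + p j - (p i - δ)) ^ (2/3:ℝ) + R)) +
      Real.sqrt (K ^ 2 + Q * (A * (p i + δ) ^ (2/3:ℝ) +
        B * (p i + p j - (p i + δ)) ^ (2/3:ℝ) + R)) <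
      2 * Real.sqrt (K ^ 2 + Q * (A * (p i) ^ (2/3:ℝ) +
        B * (p i + p j - p i) ^ (2/3:ℝ) + R)) := by
    apply sqrt_chain
    · exact add_nonneg (sq_nonneg K) (mul_nonneg hQ.le hwm)
    · exact add_nonneg (sq_nonneg K) (mul_nonneg hQ.le hwp)
    · have hQw := mul_lt_mul_of_pos_left hw hQ
      rw [mul_add] at hQw
      nlinarith [hQw]
  -- combine
  have hG1 : g1 * (p i - δ) ^ (2/3:ℝ) + g1 * (p i + δ) ^ (2/3:ℝ) ≤
      2 * (g1 * (p i) ^ (2/3:ℝ)) := by linarith [mul_lt_mul_of_pos_left c1 hg1pos]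
  have hG2 : g2 * (p i + p j - (p i - δ)) ^ (2/3:ℝ) +
      g2 * (p i + p j - (p i + δ)) ^ (2/3:ℝ) ≤
      2 * (g2 * (p i + p j - p i) ^ (2/3:ℝ)) := by
    linarith [mul_lt_mul_of_pos_left c2 hg2pos]
  have hηsq := mul_lt_mul_of_pos_left hsq hη
  rw [E0] at L1 L2
  linarith [L1, L2, hηsq, hG1, hG2]
end

section
/- Let (p*, ε*) be any minimizer of Problem 3. If client i satisfies p*ᵢ > 1/N and client j satisfies p*ⱼ = 1/N, then vᵢ ≤ vⱼ; that is, the over-selected client has a virtual cost no larger than that of any unbiasedly selected client. -/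
open Finset MeasureTheory Real

/-- Difference of two sums over `Fin N` that agree off a pair `{i, j}`. -/
lemma sum_sub_pair {N : ℕ} {i j : Fin N} (hij : i ≠ j) (f g : Fin N → ℝ)
    (h : ∀ k, k ≠ i → k ≠ j → f k = g k) :
    (∑ k, f k) - (∑ k, g k) = (f i + f j) - (g i + g j) := by
  have key : ∀ u : Fin N → ℝ,
      ∑ k, u k = u i + (u j + ∑ k ∈ (Finset.univ.erase i).erase j, u k) := by
    intro u
    rw [Finset.add_sum_erase _ u
        (Finset.mem_erase.mpr ⟨Ne.symm hij, Finset.mem_univ j⟩),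
      Finset.add_sum_erase _ u (Finset.mem_univ i)]
  have ht : ∑ k ∈ (Finset.univ.erase i).erase j, f k
      = ∑ k ∈ (Finset.univ.erase i).erase j, g k := by
    refine Finset.sum_congr rfl fun k hk => ?_
    rw [Finset.mem_erase, Finset.mem_erase] at hk
    exact h k hk.2.1 hk.1
  rw [key f, key g, ht]; ring

lemma dpError_nonneg {N : ℕ} (p ε : Fin N → ℝ) : 0 ≤ dpError p ε := by
  refine Finset.sum_nonneg fun k _ => ?_
  split <;> positivity

set_option maxHeartbeats 4000000 in
/-- At a minimizer of Problem 3, if client `i` is over-selected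
(`pᵢ > 1/N`) and client `j` is unbiasedly selected (`pⱼ = 1/N`), then
`vᵢ ≤ vⱼ`. -/
theorem over_selected_has_smaller_cost
    {N : ℕ} (hN : 2 ≤ N) (v : Fin N → ℝ)
    (hv_pos : ∀ k, 0 < v k) (hv_inj : Function.Injective v)
    (η Q : ℝ) (hη : 0 < η) (hQ : 0 < Q)
    (p ε : Fin N → ℝ) (hmin : IsMinimizer η Q v p ε)
    (i j : Fin N) (hi : 1 / (N : ℝ) < p i) (hj : p j = 1 / (N : ℝ)) :
    v i ≤ v j := by
  by_contra hvle
  push_neg at hvle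
  obtain ⟨⟨hsum, hp0, hε0, hpε⟩, hopt⟩ := hmin
  have hNpos : (0:ℝ) < N := by
    have : 0 < N := by omega
    exact_mod_cast this
  have hc : 0 < 1 / (N:ℝ) := by positivity
  have hpj : 0 < p j := by rw [hj]; exact hc
  have hpi : 0 < p i := lt_trans hc hi
  have hpji : p j < p i := by rw [hj]; exact hi
  have hij : i ≠ j := by
    rintro rfl; rw [hj] at hi; exact lt_irrefl _ hi
  have hji : j ≠ i := Ne.symm hij
  have hεi : 0 < ε i := hpε i hpi
  have hεj : 0 < ε j := hpε j hpj
  -- the swapped probability vector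
  set q1 : Fin N → ℝ := fun k => if k = i then p j else if k = j then p i else p k
    with hq1def
  have hq1i : q1 i = p j := by simp [hq1def]
  have hq1j : q1 j = p i := by simp [hq1def, hji]
  have hq1off : ∀ k, k ≠ i → k ≠ j → q1 k = p k := by
    intro k h1 h2; simp [hq1def, h1, h2]
  -- the swapped privacy vector
  set e1 : Fin N → ℝ := fun k => if k = i then ε j else if k = j then ε i else ε k
    with he1def
  have he1i : e1 i = ε j := by simp [he1def]
  have he1j : e1 j = ε i := by simp [he1def, hji]
  have he1off : ∀ k, k ≠ i → k ≠ j → e1 k = ε k := by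
    intro k h1 h2; simp [he1def, h1, h2]
  -- q1 sums to 1, is nonnegative
  have hq1sum : ∑ k, q1 k = 1 := by
    have h := sum_sub_pair hij q1 p hq1off
    rw [hq1i, hq1j] at h
    linarith [hsum]
  have hq1nn : ∀ k, 0 ≤ q1 k := by
    intro k
    rcases eq_or_ne k i with rfl | h1
    · rw [hq1i]; exact hpj.le
    rcases eq_or_ne k j with rfl | h2
    · rw [hq1j]; exact hpi.le
    · rw [hq1off k h1 h2]; exact hp0 k
  -- the ℓ¹ term is invariant under swapping p
  have hS1 : (∑ k, |q1 k - 1 / (N:ℝ)|) = ∑ k, |p k - 1 / (N:ℝ)| := by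
    have h := sum_sub_pair hij (fun k => |q1 k - 1 / (N:ℝ)|)
      (fun k => |p k - 1 / (N:ℝ)|) (fun k h1 h2 => by simp only [hq1off k h1 h2])
    simp only [hq1i, hq1j] at h
    linarith [h]
  ---------------------------------------------------------------------------
  -- Step A: full swap ⟹ ε i ≤ ε j
  ---------------------------------------------------------------------------
  have hfeas1 : Feasible q1 e1 := by
    refine ⟨hq1sum, hq1nn, ?_, ?_⟩
    · intro k
      rcases eq_or_ne k i with rfl | h1
      · rw [he1i]; exact hεj.le
      rcases eq_or_ne k j with rfl | h2
      · rw [he1j]; exact hεi.le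
      · rw [he1off k h1 h2]; exact hε0 k
    · intro k hk
      rcases eq_or_ne k i with rfl | h1
      · rw [he1i]; exact hεj
      rcases eq_or_ne k j with rfl | h2
      · rw [he1j]; exact hεi
      · rw [he1off k h1 h2]
        rw [hq1off k h1 h2] at hk
        exact hpε k hk
  have hD1 : dpError q1 e1 = dpError p ε := by
    unfold dpError
    have h := sum_sub_pair hij
      (fun k => if q1 k ≠ 0 then q1 k ^ 2 / e1 k ^ 2 else 0)
      (fun k => if p k ≠ 0 then p k ^ 2 / ε k ^ 2 else 0)
      (fun k h1 h2 => by simp only [hq1off k h1 h2, he1off k h1 h2])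
    simp only [hq1i, hq1j, he1i, he1j, ne_eq, hpi.ne', hpj.ne',
      not_false_eq_true, if_true] at h
    linarith [h]
  have hC1 : (∑ k, e1 k * v k) - (∑ k, ε k * v k)
      = (ε j * v i + ε i * v j) - (ε i * v i + ε j * v j) := by
    have h := sum_sub_pair hij (fun k => e1 k * v k) (fun k => ε k * v k)
      (fun k h1 h2 => by simp only [he1off k h1 h2])
    simp only [he1i, he1j] at h
    linarith [h]
  have hεAle : ε i ≤ ε j := by
    have key := hopt q1 e1 hfeas1
    unfold objG at key
    rw [hS1, hD1] at key
    have h0 : (0:ℝ) ≤ (ε j * v i + ε i * v j) - (ε i * v i + ε j * v j) := by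
      linarith [key, hC1]
    nlinarith [h0, hvle]
  ---------------------------------------------------------------------------
  -- Step B: swap of p only ⟹ ε j ≤ ε i
  ---------------------------------------------------------------------------
  have hfeas2 : Feasible q1 ε := by
    refine ⟨hq1sum, hq1nn, hε0, ?_⟩
    intro k hk
    rcases eq_or_ne k i with rfl | h1
    · exact hεi
    rcases eq_or_ne k j with rfl | h2
    · exact hεj
    · rw [hq1off k h1 h2] at hk
      exact hpε k hk
  have hD2 : dpError q1 ε - dpError p ε
      = (p j ^ 2 / ε i ^ 2 + p i ^ 2 / ε j ^ 2)
        - (p i ^ 2 / ε i ^ 2 + p j ^ 2 / ε j ^ 2) := by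
    unfold dpError
    have h := sum_sub_pair hij
      (fun k => if q1 k ≠ 0 then q1 k ^ 2 / ε k ^ 2 else 0)
      (fun k => if p k ≠ 0 then p k ^ 2 / ε k ^ 2 else 0)
      (fun k h1 h2 => by simp only [hq1off k h1 h2])
    simp only [hq1i, hq1j, ne_eq, hpi.ne', hpj.ne',
      not_false_eq_true, if_true] at h
    linarith [h]
  have hεBle : ε j ≤ ε i := by
    have key := hopt q1 ε hfeas2
    unfold objG at key
    rw [hS1] at key
    set S := ∑ k, |p k - 1 / (N:ℝ)| with hSdef
    -- extract monotonicity of the sqrt term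
    have hsq : Real.sqrt (S ^ 2 + Q * dpError p ε)
        ≤ Real.sqrt (S ^ 2 + Q * dpError q1 ε) := by
      rw [mul_add, mul_add] at key
      have h' : η * Real.sqrt (S ^ 2 + Q * dpError p ε)
          ≤ η * Real.sqrt (S ^ 2 + Q * dpError q1 ε) := by linarith [key]
      exact le_of_mul_le_mul_left h' hη
    have hDle : dpError p ε ≤ dpError q1 ε := by
      by_contra hcon
      push_neg at hcon
      have hnn : (0:ℝ) ≤ S ^ 2 + Q * dpError q1 ε := by
        have h1 := mul_nonneg hQ.le (dpError_nonneg q1 ε)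
        have h2 := sq_nonneg S
        linarith
      have := Real.sqrt_lt_sqrt hnn
        (by have := mul_lt_mul_of_pos_left hcon hQ; linarith :
          S ^ 2 + Q * dpError q1 ε < S ^ 2 + Q * dpError p ε)
      linarith [hsq, this]
    -- clear denominators
    have hkey : p i ^ 2 / ε i ^ 2 + p j ^ 2 / ε j ^ 2
        ≤ p j ^ 2 / ε i ^ 2 + p i ^ 2 / ε j ^ 2 := by linarith [hD2, hDle]
    have hei2 : (0:ℝ) < ε i ^ 2 := by positivity
    have hej2 : (0:ℝ) < ε j ^ 2 := by positivity
    have hmul := mul_le_mul_of_nonneg_right hkey (le_of_lt (mul_pos hei2 hej2))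
    have hpoly : (p i ^ 2 - p j ^ 2) * (ε i ^ 2 - ε j ^ 2) ≥ 0 := by
      field_simp at hmul
      nlinarith [hmul]
    have hpp : (0:ℝ) < p i ^ 2 - p j ^ 2 := by nlinarith [hpji, hpj]
    have hse : ε j ^ 2 ≤ ε i ^ 2 := by nlinarith [hpoly, hpp]
    exact (pow_le_pow_iff_left₀ hεj.le hεi.le two_ne_zero).mp hse
  have hεeq : ε i = ε j := le_antisymm hεAle hεBle
  ---------------------------------------------------------------------------
  -- Step C: averaging p i and p j strictly decreases the objective
  ---------------------------------------------------------------------------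
  set m : ℝ := (p i + p j) / 2 with hmdef
  have hm : 0 < m := by rw [hmdef]; linarith
  set q3 : Fin N → ℝ := fun k => if k = i then m else if k = j then m else p k
    with hq3def
  have hq3i : q3 i = m := by simp [hq3def]
  have hq3j : q3 j = m := by simp [hq3def, hji]
  have hq3off : ∀ k, k ≠ i → k ≠ j → q3 k = p k := by
    intro k h1 h2; simp [hq3def, h1, h2]
  have hq3sum : ∑ k, q3 k = 1 := by
    have h := sum_sub_pair hij q3 p hq3off
    rw [hq3i, hq3j] at h
    rw [hmdef] at h
    linarith [hsum]
  have hfeas3 : Feasible q3 ε := by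
    refine ⟨hq3sum, ?_, hε0, ?_⟩
    · intro k
      rcases eq_or_ne k i with rfl | h1
      · rw [hq3i]; exact hm.le
      rcases eq_or_ne k j with rfl | h2
      · rw [hq3j]; exact hm.le
      · rw [hq3off k h1 h2]; exact hp0 k
    · intro k hk
      rcases eq_or_ne k i with rfl | h1
      · exact hεi
      rcases eq_or_ne k j with rfl | h2
      · exact hεj
      · rw [hq3off k h1 h2] at hk
        exact hpε k hk
  -- ℓ¹ term invariant
  have hS3 : (∑ k, |q3 k - 1 / (N:ℝ)|) = ∑ k, |p k - 1 / (N:ℝ)| := by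
    have h := sum_sub_pair hij (fun k => |q3 k - 1 / (N:ℝ)|)
      (fun k => |p k - 1 / (N:ℝ)|) (fun k h1 h2 => by simp only [hq3off k h1 h2])
    simp only [hq3i, hq3j] at h
    have habs1 : |m - 1 / (N:ℝ)| = m - 1 / (N:ℝ) := by
      apply abs_of_pos
      rw [hmdef, hj]
      linarith
    have habs2 : |p i - 1 / (N:ℝ)| = p i - 1 / (N:ℝ) := abs_of_pos (by linarith)
    have habs3 : |p j - 1 / (N:ℝ)| = 0 := by rw [hj, sub_self, abs_zero]
    rw [habs1, habs2, habs3, hmdef, hj] at h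
    linarith [h]
  -- dpError strictly decreases
  have hD3 : dpError q3 ε - dpError p ε
      = (m ^ 2 / ε i ^ 2 + m ^ 2 / ε j ^ 2)
        - (p i ^ 2 / ε i ^ 2 + p j ^ 2 / ε j ^ 2) := by
    unfold dpError
    have h := sum_sub_pair hij
      (fun k => if q3 k ≠ 0 then q3 k ^ 2 / ε k ^ 2 else 0)
      (fun k => if p k ≠ 0 then p k ^ 2 / ε k ^ 2 else 0)
      (fun k h1 h2 => by simp only [hq3off k h1 h2])
    simp only [hq3i, hq3j, ne_eq, hm.ne', hpi.ne', hpj.ne',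
      not_false_eq_true, if_true] at h
    linarith [h]
  have hDlt : dpError q3 ε < dpError p ε := by
    have h2i : (0:ℝ) < ε i ^ 2 := by positivity
    have hnum : m ^ 2 + m ^ 2 < p i ^ 2 + p j ^ 2 := by
      rw [hmdef]; nlinarith [hpji]
    have : m ^ 2 / ε i ^ 2 + m ^ 2 / ε j ^ 2
        < p i ^ 2 / ε i ^ 2 + p j ^ 2 / ε j ^ 2 := by
      rw [← hεeq, ← add_div, ← add_div, div_lt_div_iff_of_pos_right h2i]
      exact hnum
    linarith [hD3, this]
  -- contradiction with minimality
  have key := hopt q3 ε hfeas3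
  unfold objG at key
  rw [hS3] at key
  set S := ∑ k, |p k - 1 / (N:ℝ)| with hSdef
  have hnn : (0:ℝ) ≤ S ^ 2 + Q * dpError q3 ε := by
    have h1 := mul_nonneg hQ.le (dpError_nonneg q3 ε)
    have h2 := sq_nonneg S
    linarith
  have hsqlt : Real.sqrt (S ^ 2 + Q * dpError q3 ε)
      < Real.sqrt (S ^ 2 + Q * dpError p ε) :=
    Real.sqrt_lt_sqrt hnn
      (by have := mul_lt_mul_of_pos_left hDlt hQ; linarith)
  rw [mul_add, mul_add] at key
  have := mul_lt_mul_of_pos_left hsqlt hη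
  linarith
end

section
/- Let (p*, ε*) be any minimizer of Problem 3. If client j satisfies p*ⱼ = 1/N and client k satisfies 0 < p*ₖ < 1/N, then vⱼ ≤ vₖ; that is, any unbiasedly selected client has a virtual cost no larger than that of the under-selected client. -/
open Finset MeasureTheory Real

lemma sum_two {N : ℕ} {j k : Fin N} (hjk : j ≠ k) (g : Fin N → ℝ)
    (h : ∀ i, i ≠ j → i ≠ k → g i = 0) : ∑ i, g i = g j + g k := by
  rw [← Finset.sum_pair hjk]
  refine (Finset.sum_subset (Finset.subset_univ _) fun x _ hx => ?_).symm
  simp only [Finset.mem_insert, Finset.mem_singleton, not_or] at hx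
  exact h x hx.1 hx.2

set_option maxHeartbeats 2000000 in
/-- At a minimizer of Problem 3, if client `j` is unbiasedly
selected (`pⱼ = 1/N`) and client `k` is under-selected (`0 < pₖ < 1/N`), then
`vⱼ ≤ vₖ`. -/
theorem unbiased_has_smaller_cost_than_under_selected
    {N : ℕ} (hN : 2 ≤ N) (v : Fin N → ℝ)
    (hv_pos : ∀ k, 0 < v k) (hv_inj : Function.Injective v)
    (η Q : ℝ) (hη : 0 < η) (hQ : 0 < Q)
    (p ε : Fin N → ℝ) (hmin : IsMinimizer η Q v p ε)
    (j k : Fin N) (hj : p j = 1 / (N : ℝ))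
    (hk : 0 < p k) (hk' : p k < 1 / (N : ℝ)) :
    v j ≤ v k := by
  obtain ⟨⟨hsum, hp0, he0, hpe⟩, hopt⟩ := hmin
  have hN0 : (0:ℝ) < N := by
    have : 0 < N := by omega
    exact_mod_cast this
  have hNinv : 0 < 1/(N:ℝ) := by positivity
  have hjk : j ≠ k := by rintro rfl; rw [hj] at hk'; exact lt_irrefl _ hk'
  have hpj : 0 < p j := by rw [hj]; exact hNinv
  have hεj : 0 < ε j := hpe j hpj
  have hεk : 0 < ε k := hpe k hk
  have hdpnn : ∀ (a b : Fin N → ℝ), 0 ≤ dpError a b := by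
    intro a b
    refine Finset.sum_nonneg fun i _ => ?_
    split_ifs <;> positivity
  -- Part A: swap both p and ε at j, k
  set σ := Equiv.swap j k with hσ
  have hσj : σ j = k := Equiv.swap_apply_left j k
  have hσk : σ k = j := Equiv.swap_apply_right j k
  have hσo : ∀ i, i ≠ j → i ≠ k → σ i = i := fun i h1 h2 =>
    Equiv.swap_apply_of_ne_of_ne h1 h2
  have hA : 0 ≤ (ε j - ε k) * (v k - v j) := by
    have hfeasσ : Feasible (fun i => p (σ i)) (fun i => ε (σ i)) := by
      refine ⟨?_, fun i => hp0 _, fun i => he0 _, fun i hi => hpe _ hi⟩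
      rw [Equiv.sum_comp σ p]; exact hsum
    have hineq := hopt _ _ hfeasσ
    unfold objG dpError at hineq
    rw [Equiv.sum_comp σ (fun x => |p x - 1/(N:ℝ)|),
        Equiv.sum_comp σ (fun x => if p x ≠ 0 then (p x)^2/(ε x)^2 else 0)] at hineq
    have hvs : ∑ i, ε i * v i ≤ ∑ i, ε (σ i) * v i := by linarith
    have hdiff : ∑ i, (ε (σ i) * v i - ε i * v i) =
        (ε (σ j) * v j - ε j * v j) + (ε (σ k) * v k - ε k * v k) := by
      refine sum_two hjk _ fun i h1 h2 => ?_
      rw [hσo i h1 h2]; ring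
    rw [Finset.sum_sub_distrib] at hdiff
    rw [hσj, hσk] at hdiff
    nlinarith [hvs, hdiff]
  -- Part B: move mass δ from j to k
  have hδmax : 0 < 1/(N:ℝ) - p k := by linarith
  have key : ∀ δ : ℝ, 0 < δ → δ ≤ 1/(N:ℝ) - p k →
      0 ≤ (2 * p k / (ε k)^2 - (2/(N:ℝ)) / (ε j)^2) + δ * (1/(ε j)^2 + 1/(ε k)^2) := by
    intro δ hδ hδle
    set q : Fin N → ℝ := fun i => if i = j then 1/(N:ℝ) - δ else if i = k then p k + δ else p i
      with hq
    have hqj : q j = 1/(N:ℝ) - δ := by simp [hq]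
    have hqk : q k = p k + δ := by simp [hq, hjk.symm]
    have hqo : ∀ i, i ≠ j → i ≠ k → q i = p i := fun i h1 h2 => by simp [hq, h1, h2]
    have hqjpos : 0 < q j := by rw [hqj]; linarith
    have hqkpos : 0 < q k := by rw [hqk]; linarith
    have hfeasq : Feasible q ε := by
      refine ⟨?_, ?_, he0, ?_⟩
      · have h1 : ∑ i, (q i - p i) = (q j - p j) + (q k - p k) := by
          refine sum_two hjk _ fun i h1 h2 => by rw [hqo i h1 h2]; ring
        rw [Finset.sum_sub_distrib, hsum, hqj, hqk, hj] at h1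
        linarith
      · intro i
        by_cases h1 : i = j
        · subst h1; linarith
        by_cases h2 : i = k
        · subst h2; linarith
        · rw [hqo i h1 h2]; exact hp0 i
      · intro i hi
        by_cases h1 : i = j
        · subst h1; exact hεj
        by_cases h2 : i = k
        · subst h2; exact hεk
        · exact hpe i (by rwa [hqo i h1 h2] at hi)
    have hL1 : ∑ i, |q i - 1/(N:ℝ)| = ∑ i, |p i - 1/(N:ℝ)| := by
      have h1 : ∑ i, (|q i - 1/(N:ℝ)| - |p i - 1/(N:ℝ)|) =
          (|q j - 1/(N:ℝ)| - |p j - 1/(N:ℝ)|) + (|q k - 1/(N:ℝ)| - |p k - 1/(N:ℝ)|) := by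
        refine sum_two hjk _ fun i h1 h2 => by rw [hqo i h1 h2]; ring
      rw [Finset.sum_sub_distrib] at h1
      have e1 : |q j - 1/(N:ℝ)| = δ := by
        rw [hqj, show (1/(N:ℝ) - δ) - 1/(N:ℝ) = -δ by ring, abs_neg, abs_of_pos hδ]
      have e2 : |q k - 1/(N:ℝ)| = 1/(N:ℝ) - p k - δ := by
        rw [hqk, abs_of_nonpos (by linarith)]; ring
      have e3 : |p j - 1/(N:ℝ)| = 0 := by rw [hj]; simp
      have e4 : |p k - 1/(N:ℝ)| = 1/(N:ℝ) - p k := by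
        rw [abs_of_nonpos (by linarith)]; ring
      rw [e1, e2, e3, e4] at h1
      linarith
    have hdp : dpError q ε - dpError p ε =
        ((1/(N:ℝ)-δ)^2 - (1/(N:ℝ))^2)/(ε j)^2 + ((p k + δ)^2 - (p k)^2)/(ε k)^2 := by
      unfold dpError
      rw [← Finset.sum_sub_distrib]
      rw [sum_two hjk _ (fun i h1 h2 => by rw [hqo i h1 h2]; ring)]
      rw [if_pos (ne_of_gt hqjpos), if_pos (ne_of_gt hqkpos),
          if_pos (ne_of_gt hpj), if_pos (ne_of_gt hk), hqj, hqk, hj]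
      ring
    have hineq := hopt q ε hfeasq
    unfold objG at hineq
    rw [hL1] at hineq
    have hsle : Real.sqrt ((∑ i, |p i - 1/(N:ℝ)|)^2 + Q * dpError p ε) ≤
        Real.sqrt ((∑ i, |p i - 1/(N:ℝ)|)^2 + Q * dpError q ε) := by
      have h0 : η * Real.sqrt ((∑ i, |p i - 1/(N:ℝ)|)^2 + Q * dpError p ε) ≤
          η * Real.sqrt ((∑ i, |p i - 1/(N:ℝ)|)^2 + Q * dpError q ε) := by linarith
      exact le_of_mul_le_mul_left h0 hη
    have hargle : (∑ i, |p i - 1/(N:ℝ)|)^2 + Q * dpError p ε ≤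
        (∑ i, |p i - 1/(N:ℝ)|)^2 + Q * dpError q ε := by
      by_contra hlt
      push_neg at hlt
      have hnnq : 0 ≤ (∑ i, |p i - 1/(N:ℝ)|)^2 + Q * dpError q ε := by
        have := hdpnn q ε; positivity
      exact absurd hsle (not_le.mpr (Real.sqrt_lt_sqrt hnnq hlt))
    have hdple : 0 ≤ dpError q ε - dpError p ε := by nlinarith
    rw [hdp] at hdple
    have hfact : ((1/(N:ℝ)-δ)^2 - (1/(N:ℝ))^2)/(ε j)^2 + ((p k + δ)^2 - (p k)^2)/(ε k)^2 =
        δ * ((2 * p k / (ε k)^2 - (2/(N:ℝ)) / (ε j)^2) + δ * (1/(ε j)^2 + 1/(ε k)^2)) := by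
      field_simp
      ring
    rw [hfact] at hdple
    exact nonneg_of_mul_nonneg_right hdple hδ
  -- extract c ≥ 0
  set c := 2 * p k / (ε k)^2 - (2/(N:ℝ)) / (ε j)^2 with hc_def
  set d := 1/(ε j)^2 + 1/(ε k)^2 with hd_def
  have hd : 0 < d := by rw [hd_def]; positivity
  clear_value c d
  have hc : 0 ≤ c := by
    by_contra hcneg
    push_neg at hcneg
    have hm : 0 < min (1/(N:ℝ) - p k) (-c/(2*d)) :=
      lt_min hδmax (div_pos (by linarith) (by linarith))
    have h1 := key _ hm (min_le_left _ _)
    have h2 : min (1/(N:ℝ) - p k) (-c/(2*d)) ≤ -c/(2*d) := min_le_right _ _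
    have h3 : min (1/(N:ℝ) - p k) (-c/(2*d)) * d ≤ (-c/(2*d)) * d :=
      mul_le_mul_of_nonneg_right h2 hd.le
    have h4 : (-c/(2*d)) * d = -c/2 := by field_simp
    linarith
  -- conclude ε k < ε j
  have h5 : (2/(N:ℝ))/(ε j)^2 ≤ 2 * p k/(ε k)^2 := by rw [hc_def] at hc; linarith
  rw [div_le_div_iff₀ (by positivity) (by positivity)] at h5
  have h7 : 2/(N:ℝ) * (ε k)^2 < 2/(N:ℝ) * (ε j)^2 := by
    have hprod : 0 < (1/(N:ℝ) - p k) * (ε j)^2 := mul_pos hδmax (pow_pos hεj 2)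
    have hexp : 2 * p k * (ε j)^2 = 2/(N:ℝ)*(ε j)^2 - 2*((1/(N:ℝ) - p k)*(ε j)^2) := by ring
    linarith only [h5, hprod, hexp]
  have h6 : (ε k)^2 < (ε j)^2 := (mul_lt_mul_iff_right₀ (by positivity)).mp h7
  have hεlt : ε k < ε j := lt_of_pow_lt_pow_left₀ 2 hεj.le h6
  by_contra hvv
  push_neg at hvv
  have : 0 < (ε j - ε k) * (v j - v k) := mul_pos (by linarith only [hεlt]) (by linarith only [hvv])
  nlinarith [hA, this]
end

section
/- Let (p*, ε*) be any minimizer of Problem 3. If client k satisfies 0 < p*ₖ < 1/N and client l satisfies p*ₗ = 0, then vₖ ≤ vₗ; that is, every excluded client has a virtual cost no smaller than that of the under-selected client. -/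
open Finset MeasureTheory Real

/-- At a minimizer of Problem 3, if client `k` is under-selected
(`0 < pₖ < 1/N`) and client `l` is excluded (`pₗ = 0`), then `vₖ ≤ vₗ`. -/
theorem under_selected_has_smaller_cost_than_excluded
    {N : ℕ} (hN : 2 ≤ N) (v : Fin N → ℝ)
    (hv_pos : ∀ k, 0 < v k) (hv_inj : Function.Injective v)
    (η Q : ℝ) (hη : 0 < η) (hQ : 0 < Q)
    (p ε : Fin N → ℝ) (hmin : IsMinimizer η Q v p ε)
    (k l : Fin N) (hk : 0 < p k) (hk' : p k < 1 / (N : ℝ)) (hl : p l = 0) :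
    v k ≤ v l := by
  obtain ⟨⟨hsum, hp, hε, hpε⟩, hopt⟩ := hmin
  have hkl : k ≠ l := by
    intro h; rw [h, hl] at hk; exact lt_irrefl 0 hk
  set σ := Equiv.swap k l with hσ
  have hσk : σ k = l := Equiv.swap_apply_left k l
  have hσl : σ l = k := Equiv.swap_apply_right k l
  have hσj : ∀ j, j ≠ k → j ≠ l → σ j = j := fun j h1 h2 =>
    Equiv.swap_apply_of_ne_of_ne h1 h2
  set q : Fin N → ℝ := fun j => p (σ j) with hq
  set e : Fin N → ℝ := Function.update (fun j => ε (σ j)) k 0 with he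
  have hqk : q k = 0 := by simp [hq, hσk, hl]
  have hql : q l = p k := by simp [hq, hσl]
  have hek : e k = 0 := by simp [he]
  have hel : e l = ε k := by
    rw [he, Function.update_of_ne hkl.symm]; simp [hσl]
  have hej : ∀ j, j ≠ k → j ≠ l → e j = ε j := by
    intro j h1 h2
    rw [he, Function.update_of_ne h1]; simp [hσj j h1 h2]
  have hqj : ∀ j, j ≠ k → j ≠ l → q j = p j := by
    intro j h1 h2; simp [hq, hσj j h1 h2]
  -- feasibility of (q, e)
  have hfeas : Feasible q e := by
    refine ⟨?_, ?_, ?_, ?_⟩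
    · rw [hq, Equiv.sum_comp σ p]; exact hsum
    · intro j; exact hp (σ j)
    · intro j
      by_cases hj : j = k
      · subst hj; rw [hek]
      · rw [he, Function.update_of_ne hj]; exact hε (σ j)
    · intro j hj
      by_cases hj' : j = k
      · subst hj'; rw [hqk] at hj; exact absurd hj (lt_irrefl 0)
      · rw [he, Function.update_of_ne hj']
        exact hpε (σ j) hj
  have hkey := hopt q e hfeas
  -- the η-term is equal
  have hL1 : (∑ j, |q j - 1 / (N : ℝ)|) = ∑ j, |p j - 1 / (N : ℝ)| := by
    rw [hq]
    exact Equiv.sum_comp σ (fun j => |p j - 1 / (N : ℝ)|)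
  have hdp : dpError q e = dpError p ε := by
    unfold dpError
    rw [← Equiv.sum_comp σ (fun j => if p j ≠ 0 then (p j) ^ 2 / (ε j) ^ 2 else 0)]
    apply Finset.sum_congr rfl
    intro j _
    by_cases hj : j = k
    · subst hj
      simp [hqk, hσk, hl]
    · rw [he, Function.update_of_ne hj]
  have hsumle : (∑ j, ε j * v j) ≤ ∑ j, e j * v j := by
    have h1 : objG η Q v p ε = η * ((∑ j, |p j - 1 / (N : ℝ)|) +
        Real.sqrt ((∑ j, |p j - 1 / (N : ℝ)|) ^ 2 + Q * dpError p ε)) +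
        ∑ j, ε j * v j := rfl
    have h2 : objG η Q v q e = η * ((∑ j, |p j - 1 / (N : ℝ)|) +
        Real.sqrt ((∑ j, |p j - 1 / (N : ℝ)|) ^ 2 + Q * dpError p ε)) +
        ∑ j, e j * v j := by
      unfold objG
      rw [hL1, hdp]
    rw [h1, h2] at hkey
    linarith
  have hdiff : (∑ j, (e j * v j - ε j * v j)) =
      ∑ j ∈ ({k, l} : Finset (Fin N)), (e j * v j - ε j * v j) := by
    apply (Finset.sum_subset (Finset.subset_univ _) ?_).symm
    intro j _ hj
    simp only [Finset.mem_insert, Finset.mem_singleton, not_or] at hj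
    rw [hej j hj.1 hj.2]
    ring
  rw [Finset.sum_pair hkl] at hdiff
  have hεk : 0 < ε k := hpε k hk
  have hεl : 0 ≤ ε l * v l := mul_nonneg (hε l) (hv_pos l).le
  have h0 : 0 ≤ ∑ j, (e j * v j - ε j * v j) := by
    rw [Finset.sum_sub_distrib]
    linarith
  rw [hdiff, hek, hel] at h0
  have : ε k * v k ≤ ε k * v l := by linarith
  exact le_of_mul_le_mul_left (by linarith) hεk
end

section
/- For all real numbers x and y with x ≥ 1 and 0 < y ≤ 1, one has (x − √2·y)² + (1/x − √2/y)² ≥ 6 − 4√2, and equality holds at x = y = 1. -/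
open Real

set_option maxHeartbeats 1000000 in
/-- For `x ≥ 1` and `0 < y ≤ 1`,
`(x − √2 y)² + (1/x − √2/y)² ≥ 6 − 4√2`, with equality at `x = y = 1`. -/
theorem two_variable_exchange_bound :
    (∀ x y : ℝ, 1 ≤ x → 0 < y → y ≤ 1 →
      6 - 4 * Real.sqrt 2 ≤
        (x - Real.sqrt 2 * y) ^ 2 + (1 / x - Real.sqrt 2 / y) ^ 2) ∧
    ((1 - Real.sqrt 2 * 1) ^ 2 + (1 / 1 - Real.sqrt 2 / 1) ^ 2
      = 6 - 4 * Real.sqrt 2) := by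
  have hs2 : Real.sqrt 2 ^ 2 = 2 := Real.sq_sqrt (by norm_num)
  constructor
  · intro x y hx hy hy1
    have hs2 : Real.sqrt 2 ^ 2 = 2 := Real.sq_sqrt (by norm_num)
    have hs0 : 0 ≤ Real.sqrt 2 := Real.sqrt_nonneg 2
    set s := Real.sqrt 2 with hsdef
    clear_value s
    have hs1 : 1 ≤ s := by nlinarith
    have hs15 : s ≤ 1.5 := by nlinarith
    have hx0 : 0 < x := lt_of_lt_of_le one_pos hx
    have hu : 1 / x = 1 - (x - 1) / x := by field_simp; ring
    have hv : s / y = s + s * ((1 - y) / y) := by field_simp; ring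
    rw [hu, hv]
    set p := (x - 1) / x with hp
    set q := (1 - y) / y with hq
    have hp0 : 0 ≤ p := by rw [hp]; apply div_nonneg <;> linarith
    have hq0 : 0 ≤ q := by rw [hq]; apply div_nonneg <;> linarith
    have hq1 : 1 - y ≤ q := by rw [hq, le_div_iff₀ hy]; nlinarith
    have hp1 : p ≤ x - 1 := by rw [hp, div_le_iff₀ hx0]; nlinarith
    clear_value p q
    set a := (x - 1) + s * (1 - y) with ha
    set b := s * q + p with hb
    have ha0 : 0 ≤ a := by nlinarith
    have hb0 : 0 ≤ b := by nlinarith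
    have hA : x - s * y = a - (s - 1) := by rw [ha]; ring
    have hB : 1 - p - (s + s * q) = -(b + (s - 1)) := by rw [hb]; ring
    rw [hA, hB]
    clear_value a b
    have hax : x - 1 ≤ a := by nlinarith
    have hpx : p * x = x - 1 := by rw [hp]; field_simp
    have h2 : (x - 1) - p ≤ (x - 1) ^ 2 := by
      nlinarith [hpx, mul_nonneg (sq_nonneg (x-1)) (by linarith : (0:ℝ) ≤ x - 1)]
    have h3 : 0 ≤ s * (q - (1 - y)) := mul_nonneg (by linarith) (by linarith)
    have hab : a - b ≤ (x - 1) ^ 2 := by nlinarith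
    have h6 : (x - 1) ^ 2 ≤ a ^ 2 := by
      have := mul_self_le_mul_self (by linarith : (0:ℝ) ≤ x - 1) hax
      simpa [sq] using this
    have key : 0 ≤ a ^ 2 + b ^ 2 + 2 * (s - 1) * (b - a) := by
      rcases le_total a b with h | h
      · have h7 : 0 ≤ 2 * (s - 1) * (b - a) :=
          mul_nonneg (by linarith) (by linarith)
        nlinarith [sq_nonneg a, sq_nonneg b]
      · have h5 : 2 * (s - 1) * (a - b) ≤ a - b := by
          nlinarith [mul_nonneg (show (0:ℝ) ≤ 3 - 2*s by linarith)
            (show (0:ℝ) ≤ a - b by linarith)]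
        nlinarith [sq_nonneg b]
    have expand : (a - (s-1)) ^ 2 + (-(b + (s-1))) ^ 2
        = a ^ 2 + b ^ 2 + 2 * (s - 1) * (b - a) + (6 - 4 * s) := by
      linear_combination 2 * hs2
    rw [expand]
    linarith
  · norm_num
    linear_combination 2 * hs2
end

section
/- For every real number x ≥ 1, 3·(x^{1/3} + x^{−1/3}) − 2√2·(x^{1/2} + x^{−1/2}) ≤ 6 − 4√2, with equality at x = 1. -/
open Real

lemma key_poly (s : ℝ) (hs : 1 ≤ s) :
    3 * (s ^ 2 + (s ^ 2)⁻¹) - 2 * Real.sqrt 2 * (s ^ 3 + (s ^ 3)⁻¹)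
      ≤ 6 - 4 * Real.sqrt 2 := by
  have hs0 : (0 : ℝ) < s := lt_of_lt_of_le one_pos hs
  have hr : Real.sqrt 2 ^ 2 = 2 := Real.sq_sqrt (by norm_num)
  have hr1 : (1 : ℝ) ≤ Real.sqrt 2 := by
    nlinarith [Real.sqrt_nonneg 2]
  set r := Real.sqrt 2
  have quart : 0 ≤ 2*r*s^4 + (4*r-3)*s^3 + (6*r-6)*s^2 + (4*r-3)*s + 2*r := by
    nlinarith [pow_pos hs0 4, pow_pos hs0 3, pow_pos hs0 2, hs0]
  have key : 0 ≤ (s-1)^2 * (2*r*s^4 + (4*r-3)*s^3 + (6*r-6)*s^2 + (4*r-3)*s + 2*r) :=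
    mul_nonneg (sq_nonneg _) quart
  have hc : (0:ℝ) < s ^ 3 := by positivity
  have hid : (6 - 4*r) - (3 * (s ^ 2 + (s ^ 2)⁻¹) - 2 * r * (s ^ 3 + (s ^ 3)⁻¹))
      = (s-1)^2 * (2*r*s^4 + (4*r-3)*s^3 + (6*r-6)*s^2 + (4*r-3)*s + 2*r) / s^3 := by
    field_simp
    ring
  have hnn := div_nonneg key hc.le
  linarith [hid ▸ hnn]

/-- For every real `x ≥ 1`,
`3(x^{1/3} + x^{−1/3}) − 2√2(x^{1/2} + x^{−1/2}) ≤ 6 − 4√2`,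
with equality at `x = 1`. -/
theorem cube_root_vs_square_root_bound :
    (∀ x : ℝ, 1 ≤ x →
      3 * (x ^ ((1 : ℝ) / 3) + x ^ (-((1 : ℝ) / 3)))
        - 2 * Real.sqrt 2 * (x ^ ((1 : ℝ) / 2) + x ^ (-((1 : ℝ) / 2)))
      ≤ 6 - 4 * Real.sqrt 2) ∧
    (3 * ((1 : ℝ) ^ ((1 : ℝ) / 3) + (1 : ℝ) ^ (-((1 : ℝ) / 3)))
        - 2 * Real.sqrt 2 * ((1 : ℝ) ^ ((1 : ℝ) / 2) + (1 : ℝ) ^ (-((1 : ℝ) / 2)))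
      = 6 - 4 * Real.sqrt 2) := by
  constructor
  · intro x hx
    have hx0 : (0 : ℝ) < x := lt_of_lt_of_le one_pos hx
    set s := x ^ ((1 : ℝ) / 6) with hsdef
    have hs1 : 1 ≤ s := Real.one_le_rpow hx (by norm_num)
    have h13 : x ^ ((1 : ℝ) / 3) = s ^ 2 := by
      rw [hsdef, ← Real.rpow_natCast (x ^ ((1:ℝ)/6)) 2, ← Real.rpow_mul hx0.le]
      norm_num
    have h12 : x ^ ((1 : ℝ) / 2) = s ^ 3 := by
      rw [hsdef, ← Real.rpow_natCast (x ^ ((1:ℝ)/6)) 3, ← Real.rpow_mul hx0.le]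
      norm_num
    have hn13 : x ^ (-((1 : ℝ) / 3)) = (s ^ 2)⁻¹ := by
      rw [Real.rpow_neg hx0.le, h13]
    have hn12 : x ^ (-((1 : ℝ) / 2)) = (s ^ 3)⁻¹ := by
      rw [Real.rpow_neg hx0.le, h12]
    rw [h13, h12, hn13, hn12]
    exact key_poly s hs1
  · simp [Real.one_rpow]
    ring
end

section
/- For all real numbers p₁, p₂, v₁, v₂ with 0 < p₂ ≤ p₁ and 0 < v₁ < v₂, the strict inequality (p₁ + p₂)²·(v₁² + v₂²) > ((p₁·v₁)^{2/3} + (p₂·v₂)^{2/3})³ holds. -/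
open Real

lemma cube_root_cube {x : ℝ} (hx : 0 < x) : (x ^ ((1:ℝ)/3)) ^ 3 = x := by
  rw [← Real.rpow_natCast (x ^ ((1:ℝ)/3)) 3, ← Real.rpow_mul hx.le]
  norm_num

lemma two_thirds_eq {x : ℝ} (hx : 0 < x) : x ^ ((2:ℝ)/3) = (x ^ ((1:ℝ)/3)) ^ 2 := by
  rw [← Real.rpow_natCast (x ^ ((1:ℝ)/3)) 2, ← Real.rpow_mul hx.le]
  norm_num

/-- For `0 < p₂ ≤ p₁` and `0 < v₁ < v₂`,
`(p₁ + p₂)² (v₁² + v₂²) > ((p₁ v₁)^{2/3} + (p₂ v₂)^{2/3})³`. -/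
theorem two_client_exchange_inequality
    (p₁ p₂ v₁ v₂ : ℝ) (hp₂ : 0 < p₂) (hp : p₂ ≤ p₁)
    (hv₁ : 0 < v₁) (hv : v₁ < v₂) :
    ((p₁ * v₁) ^ ((2 : ℝ) / 3) + (p₂ * v₂) ^ ((2 : ℝ) / 3)) ^ 3
      < (p₁ + p₂) ^ 2 * (v₁ ^ 2 + v₂ ^ 2) := by
  have hp₁ : 0 < p₁ := lt_of_lt_of_le hp₂ hp
  have hv₂ : 0 < v₂ := hv₁.trans hv
  set P₁ := p₁ ^ ((1:ℝ)/3) with hP₁def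
  set P₂ := p₂ ^ ((1:ℝ)/3) with hP₂def
  set V₁ := v₁ ^ ((1:ℝ)/3) with hV₁def
  set V₂ := v₂ ^ ((1:ℝ)/3) with hV₂def
  have hP₁pos : 0 < P₁ := Real.rpow_pos_of_pos hp₁ _
  have hP₂pos : 0 < P₂ := Real.rpow_pos_of_pos hp₂ _
  have hV₁pos : 0 < V₁ := Real.rpow_pos_of_pos hv₁ _
  have hV₂pos : 0 < V₂ := Real.rpow_pos_of_pos hv₂ _
  have hPle : P₂ ≤ P₁ := Real.rpow_le_rpow hp₂.le hp (by norm_num)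
  have hVlt : V₁ < V₂ := Real.rpow_lt_rpow hv₁.le hv (by norm_num)
  have e1 : (p₁ * v₁) ^ ((2:ℝ)/3) = P₁ ^ 2 * V₁ ^ 2 := by
    rw [Real.mul_rpow hp₁.le hv₁.le, two_thirds_eq hp₁, two_thirds_eq hv₁]
  have e2 : (p₂ * v₂) ^ ((2:ℝ)/3) = P₂ ^ 2 * V₂ ^ 2 := by
    rw [Real.mul_rpow hp₂.le hv₂.le, two_thirds_eq hp₂, two_thirds_eq hv₂]
  have ep1 : p₁ = P₁ ^ 3 := (cube_root_cube hp₁).symm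
  have ep2 : p₂ = P₂ ^ 3 := (cube_root_cube hp₂).symm
  have ev1 : v₁ = V₁ ^ 3 := (cube_root_cube hv₁).symm
  have ev2 : v₂ = V₂ ^ 3 := (cube_root_cube hv₂).symm
  rw [e1, e2, ep1, ep2, ev1, ev2]
  -- Now a polynomial inequality in P₁ P₂ V₁ V₂
  -- difference = (z-x)²(z+2x) + (z'-x')²(z'+2x') with
  -- x = P₁P₂V₁², z = P₁²V₂², x' = P₁P₂V₂², z' = P₂²V₁²
  have hV2 : V₁ ^ 2 < V₂ ^ 2 := by nlinarith
  have h1 : P₂ * V₁ ^ 2 < P₁ * V₂ ^ 2 :=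
    lt_of_le_of_lt (mul_le_mul_of_nonneg_right hPle (sq_nonneg V₁))
      (mul_lt_mul_of_pos_left hV2 hP₁pos)
  have hxz : P₁ * P₂ * V₁ ^ 2 < P₁ ^ 2 * V₂ ^ 2 := by
    nlinarith [mul_lt_mul_of_pos_left h1 hP₁pos]
  have key1 : 0 < (P₁ ^ 2 * V₂ ^ 2 - P₁ * P₂ * V₁ ^ 2) ^ 2
      * (P₁ ^ 2 * V₂ ^ 2 + 2 * (P₁ * P₂ * V₁ ^ 2)) := by
    apply mul_pos (pow_pos (sub_pos.2 hxz) 2)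
    positivity
  have key2 : 0 ≤ (P₂ ^ 2 * V₁ ^ 2 - P₁ * P₂ * V₂ ^ 2) ^ 2
      * (P₂ ^ 2 * V₁ ^ 2 + 2 * (P₁ * P₂ * V₂ ^ 2)) := by positivity
  nlinarith [key1, key2]
end
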